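/- arXiv:2211.17129 — 5 statements merged into one kernel-verified Lean document; each statement's English description precedes it below -/
import Mathlib

section
/- Let Δ = conv{v_0, v_1, …, v_n} ⊆ ℝ^n be an n-dimensional simplex whose vertices v_0, …, v_n are affinely independent points of ℤ^n. Then for every j ≥ 0, the coefficient of X^j in the power series (1−X)^{n+1}·Ehr_Δ(X) equals the number of fundamental parallelepiped points λ of Δ with height Σ_i λ_i = j. Equivalently, (1−X)^{n+1}·Ehr_Δ(X) = Σ_λ X^{Σ_i λ_i}, the sum running over all fundamental parallelepiped points λ of Δ. -/
open scoped BigOperators Pointwise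

/-- Ehrhart series of a (bounded) set `P ⊆ ℝ^n`: the coefficient of `X^t` is the
number of lattice points of `ℤ^n` in the dilate `t • P`. -/
noncomputable def ehrhartSeries {n : ℕ} (P : Set (Fin n → ℝ)) : PowerSeries ℤ :=
  PowerSeries.mk fun t =>
    (Set.ncard {x : Fin n → ℤ | (fun i => (x i : ℝ)) ∈ (t : ℝ) • P} : ℤ)

/-- `lam` is a fundamental parallelepiped point for the simplex with vertices `v`:
`0 ≤ lam i < 1` for all `i` and `∑ i, lam i • (1, v i) ∈ ℤ^{n+1}`. -/
def IsFPP {N n : ℕ} (v : Fin N → Fin n → ℝ) (lam : Fin N → ℝ) : Prop :=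
  (∀ i, 0 ≤ lam i ∧ lam i < 1) ∧
  (∃ z : ℤ, ∑ i, lam i = (z : ℝ)) ∧
  (∀ j, ∃ z : ℤ, ∑ i, lam i * v i j = (z : ℝ))

open Finset Set Pointwise

section Aux

variable {n : ℕ} {v : Fin (n + 1) → Fin n → ℤ}

noncomputable def compEquivSym (N k : ℕ) :
    {m : Fin N → ℕ // ∑ i, m i = k} ≃ Sym (Fin N) k := by
  have key : ∀ f : Fin N →₀ ℕ, Multiset.card (Multiset.toFinsupp.symm f) = ∑ i, f i := by
    intro f
    have h1 : (Multiset.toFinsupp.symm f : Multiset (Fin N)) = Finsupp.toMultiset f := by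
      rw [← Multiset.toFinsupp_eq_iff, AddEquiv.apply_symm_apply]
    rw [h1, Finsupp.card_toMultiset, Finsupp.sum_fintype _ _ (fun i => rfl)]
    simp
  exact (Finsupp.equivFunOnFinite.symm.trans Multiset.toFinsupp.toEquiv.symm).subtypeEquiv
      (fun m => by
        simp only [Equiv.trans_apply, AddEquiv.toEquiv_symm, AddEquiv.toEquiv_eq_coe,
          EquivLike.coe_coe]
        erw [key (Finsupp.equivFunOnFinite.symm m)]
        simp [Finsupp.equivFunOnFinite]
        exact Iff.rfl)

noncomputable instance compFintype (N k : ℕ) : Fintype {m : Fin N → ℕ // ∑ i, m i = k} :=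
  Fintype.ofEquiv _ (compEquivSym N k).symm

theorem card_comp (N k : ℕ) :
    Nat.card {m : Fin (N + 1) → ℕ // ∑ i, m i = k} = (N + k).choose N := by
  rw [Nat.card_congr (compEquivSym (N + 1) k), Nat.card_eq_fintype_card,
    Sym.card_sym_eq_multichoose, Nat.multichoose_eq]
  simp only [Fintype.card_fin]
  rw [show N + 1 + k - 1 = N + k by omega, ← Nat.choose_symm (Nat.le_add_left k N)]
  congr 1
  omega

theorem coords_unique (hv : AffineIndependent ℝ fun i => fun j => ((v i j : ℤ) : ℝ))
    {c c' : Fin (n + 1) → ℝ} (h1 : ∑ i, c i = ∑ i, c' i)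
    (h2 : ∀ j, ∑ i, c i * (v i j : ℝ) = ∑ i, c' i * (v i j : ℝ)) : c = c' := by
  have key := affineIndependent_iff.mp hv Finset.univ (c - c')
    (by simp [Finset.sum_sub_distrib, h1])
    (by
      funext j
      rw [Finset.sum_apply]
      simp only [Pi.sub_apply, Pi.smul_apply, smul_eq_mul, sub_mul, Pi.zero_apply]
      rw [Finset.sum_sub_distrib]
      simp [h1, h2 j])
  funext i
  have := key i (Finset.mem_univ i)
  simpa [sub_eq_zero] using this

theorem mem_dilate_iff (t : ℕ) (x : Fin n → ℤ) :
    ((fun i => (x i : ℝ)) ∈ (t : ℝ) • convexHull ℝ (Set.range fun i => fun j' => ((v i j' : ℤ) : ℝ)))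
      ↔ ∃ c : Fin (n + 1) → ℝ, (∀ i, 0 ≤ c i) ∧ (∑ i, c i = t) ∧
          (∀ j, ∑ i, c i * (v i j : ℝ) = (x j : ℝ)) := by
  set V : Fin (n + 1) → Fin n → ℝ := fun i => fun j' => ((v i j' : ℤ) : ℝ) with hV
  rcases Nat.eq_zero_or_pos t with ht | ht
  · subst ht
    have hne : (convexHull ℝ (Set.range V)).Nonempty :=
      (Set.range_nonempty V).mono (subset_convexHull ℝ _)
    rw [Nat.cast_zero, Set.zero_smul_set hne]
    constructor
    · rintro hx
      refine ⟨0, fun i => le_refl 0, by simp, fun j => ?_⟩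
      have : (x j : ℝ) = 0 := congrFun hx j
      simp [this]
    · rintro ⟨c, hc0, hcs, hcx⟩
      have hc : ∀ i, c i = 0 := by
        intro i
        have := Finset.sum_eq_zero_iff_of_nonneg (fun i _ => hc0 i) |>.mp (by simpa using hcs)
        exact this i (Finset.mem_univ i)
      funext j
      have := hcx j
      simp only [hc, zero_mul, Finset.sum_const_zero] at this
      simp [← this]
  · have ht' : (t : ℝ) ≠ 0 := by positivity
    rw [Set.mem_smul_set_iff_inv_smul_mem₀ ht']
    rw [convexHull_range_eq_exists_affineCombination]
    constructor
    · rintro ⟨s, w, hw0, hw1, hws⟩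
      refine ⟨fun i => if i ∈ s then t * w i else 0, ?_, ?_, ?_⟩
      · intro i
        by_cases hi : i ∈ s <;> simp [hi]
        exact mul_nonneg (by positivity) (hw0 i hi)
      · rw [Finset.sum_ite_mem, Finset.univ_inter, ← Finset.mul_sum, hw1, mul_one]
      · intro j
        have := congrFun (s.affineCombination_eq_linear_combination V w hw1 ▸ hws) j
        rw [Finset.sum_apply] at this
        simp only [Pi.smul_apply, smul_eq_mul] at this
        have hx : (x j : ℝ) = t * ∑ i ∈ s, w i * V i j := by
          rw [this]; field_simp
        simp only [ite_mul, zero_mul]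
        rw [Finset.sum_ite_mem, Finset.univ_inter]
        rw [hx, Finset.mul_sum]
        exact Finset.sum_congr rfl fun i hi => by ring
    · rintro ⟨c, hc0, hcs, hcx⟩
      refine ⟨Finset.univ, fun i => c i / t, fun i _ => div_nonneg (hc0 i) (by positivity), ?_, ?_⟩
      · rw [← Finset.sum_div, hcs, div_self ht']
      · rw [Finset.affineCombination_eq_linear_combination _ _ _ (by rw [← Finset.sum_div, hcs, div_self ht'])]
        funext j
        rw [Finset.sum_apply]
        simp only [Pi.smul_apply, smul_eq_mul]
        rw [← hcx j, Finset.mul_sum]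
        exact Finset.sum_congr rfl fun i _ => by field_simp; rfl

theorem fpp_finite (hv : AffineIndependent ℝ fun i => fun j => ((v i j : ℤ) : ℝ)) :
    {lam : Fin (n + 1) → ℝ | IsFPP (fun i j' => ((v i j' : ℤ) : ℝ)) lam}.Finite := by
  set S := {lam : Fin (n + 1) → ℝ | IsFPP (fun i j' => ((v i j' : ℤ) : ℝ)) lam}
  set Φ : (Fin (n + 1) → ℝ) → ℤ × (Fin n → ℤ) :=
    fun lam => (⌊∑ i, lam i⌋, fun j => ⌊∑ i, lam i * (v i j : ℝ)⌋) with hΦ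
  have hfloor : ∀ lam ∈ S, ((⌊∑ i, lam i⌋ : ℤ) : ℝ) = ∑ i, lam i ∧
      ∀ j, ((⌊∑ i, lam i * (v i j : ℝ)⌋ : ℤ) : ℝ) = ∑ i, lam i * (v i j : ℝ) := by
    rintro lam ⟨_, ⟨z, hz⟩, hj⟩
    constructor
    · rw [hz, Int.floor_intCast]
    · intro j
      obtain ⟨z', hz'⟩ := hj j
      rw [hz', Int.floor_intCast]
  apply Set.Finite.of_finite_image (f := Φ)
  · apply Set.Finite.subset
      (Set.Finite.prod (Set.finite_Icc (0 : ℤ) (n + 1))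
        (Set.Finite.pi (fun j => Set.finite_Icc (-(∑ i, (v i j).natAbs) : ℤ) (∑ i, (v i j).natAbs))))
    rintro p ⟨lam, hlam, rfl⟩
    obtain ⟨hb, hz, hj⟩ := hlam
    constructor
    · simp only [Set.mem_Icc]
      constructor
      · exact Int.le_floor.mpr (by push_cast; exact Finset.sum_nonneg fun i _ => (hb i).1)
      · have hle : ∑ i, lam i ≤ ((n + 1 : ℤ) : ℝ) := by
          push_cast
          calc ∑ i, lam i ≤ ∑ _i : Fin (n + 1), (1 : ℝ) :=
                Finset.sum_le_sum fun i _ => (hb i).2.le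
            _ = n + 1 := by simp
        exact_mod_cast (Int.floor_le (∑ i, lam i)).trans hle
    · intro j _
      simp only [Set.mem_Icc]
      have habs : |∑ i, lam i * (v i j : ℝ)| ≤ ∑ i, |(v i j : ℝ)| := by
        refine le_trans (Finset.abs_sum_le_sum_abs _ _) (Finset.sum_le_sum fun i _ => ?_)
        rw [abs_mul, abs_of_nonneg (hb i).1]
        calc lam i * |(v i j : ℝ)| ≤ 1 * |(v i j : ℝ)| :=
              mul_le_mul_of_nonneg_right (hb i).2.le (abs_nonneg _)
          _ = |(v i j : ℝ)| := one_mul _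
      rw [abs_le] at habs
      constructor
      · apply Int.le_floor.mpr; push_cast; exact habs.1
      · have h2 : ∑ i, lam i * (v i j : ℝ) ≤ ((∑ i, (v i j).natAbs : ℤ) : ℝ) := by
          push_cast; exact habs.2
        exact_mod_cast (Int.floor_le (∑ i, lam i * (v i j : ℝ))).trans h2
  · rintro lam hlam lam' hlam' heq
    obtain ⟨h1, h1'⟩ := hfloor lam hlam
    obtain ⟨h2, h2'⟩ := hfloor lam' hlam'
    have e1 : (⌊∑ i, lam i⌋ : ℤ) = ⌊∑ i, lam' i⌋ := congrArg Prod.fst heq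
    have e2 : ∀ j, (⌊∑ i, lam i * (v i j : ℝ)⌋ : ℤ) = ⌊∑ i, lam' i * (v i j : ℝ)⌋ :=
      fun j => congrFun (congrArg Prod.snd heq) j
    apply coords_unique hv
    · rw [← h1, ← h2, e1]
    · intro j; rw [← h1' j, ← h2' j, e2 j]

theorem count_lattice (hv : AffineIndependent ℝ fun i => fun j => ((v i j : ℤ) : ℝ)) (t : ℕ) :
    Nat.card {x : Fin n → ℤ //
        (fun i => (x i : ℝ)) ∈ (t : ℝ) • convexHull ℝ (Set.range fun i => fun j' => ((v i j' : ℤ) : ℝ))}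
      = ∑ s ∈ Finset.range (t + 1),
          {lam : Fin (n + 1) → ℝ |
            IsFPP (fun i j' => ((v i j' : ℤ) : ℝ)) lam ∧ ∑ i, lam i = (s : ℝ)}.ncard
            * (n + (t - s)).choose n := by
  classical
  set V : Fin (n + 1) → Fin n → ℝ := fun i => fun j' => ((v i j' : ℤ) : ℝ) with hV
  -- the sigma type
  let F : ℕ → Type _ := fun s => {lam : Fin (n + 1) → ℝ // IsFPP V lam ∧ ∑ i, lam i = (s : ℝ)}
  let M : ℕ → Type _ := fun k => {m : Fin (n + 1) → ℕ // ∑ i, m i = k}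
  let T := Σ s : Fin (t + 1), F s × M (t - s)
  -- the map
  have key : ∀ (s : Fin (t + 1)) (lam : Fin (n + 1) → ℝ) (m : Fin (n + 1) → ℕ),
      IsFPP V lam → ∑ i, lam i = ((s : ℕ) : ℝ) → ∑ i, m i = t - (s : ℕ) →
      (∀ i, 0 ≤ lam i + (m i : ℝ)) ∧ (∑ i, (lam i + (m i : ℝ)) = t) ∧
        (∀ j, ∃ z : ℤ, ∑ i, (lam i + (m i : ℝ)) * V i j = (z : ℝ)) := by
    rintro s lam m ⟨hb, _, hj⟩ hsum hm
    have hst : (s : ℕ) ≤ t := Nat.lt_succ_iff.mp s.isLt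
    refine ⟨fun i => add_nonneg (hb i).1 (Nat.cast_nonneg _), ?_, ?_⟩
    · rw [Finset.sum_add_distrib, hsum, ← Nat.cast_sum _ _, hm]
      push_cast [Nat.cast_sub hst]
      ring
    · intro j
      obtain ⟨z, hz⟩ := hj j
      refine ⟨z + ∑ i, (m i : ℤ) * v i j, ?_⟩
      simp only [add_mul, Finset.sum_add_distrib, hz]
      push_cast
      ring
  let Ψ : T → {x : Fin n → ℤ // (fun i => (x i : ℝ)) ∈ (t : ℝ) • convexHull ℝ (Set.range V)} :=
    fun p =>
      ⟨fun j => ⌊∑ i, (p.2.1.1 i + (p.2.2.1 i : ℝ)) * V i j⌋, by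
        obtain ⟨h0, hsum, hint⟩ := key p.1 p.2.1.1 p.2.2.1 p.2.1.2.1 p.2.1.2.2 p.2.2.2
        rw [mem_dilate_iff]
        refine ⟨fun i => p.2.1.1 i + (p.2.2.1 i : ℝ), h0, hsum, fun j => ?_⟩
        obtain ⟨z, hz⟩ := hint j
        rw [hz, Int.floor_intCast]⟩
  have hΨval : ∀ p : T, ∀ j, (((Ψ p).1 j : ℤ) : ℝ) = ∑ i, (p.2.1.1 i + (p.2.2.1 i : ℝ)) * V i j := by
    intro p j
    obtain ⟨h0, hsum, hint⟩ := key p.1 p.2.1.1 p.2.2.1 p.2.1.2.1 p.2.1.2.2 p.2.2.2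
    obtain ⟨z, hz⟩ := hint j
    show ((⌊∑ i, (p.2.1.1 i + (p.2.2.1 i : ℝ)) * V i j⌋ : ℤ) : ℝ) = _
    rw [hz, Int.floor_intCast]
  have hbij : Function.Bijective Ψ := by
    constructor
    · rintro ⟨s, ⟨lam, hlam⟩, ⟨m, hm⟩⟩ ⟨s', ⟨lam', hlam'⟩, ⟨m', hm'⟩⟩ heq
      have hsum := (key s lam m hlam.1 hlam.2 hm).2.1
      have hsum' := (key s' lam' m' hlam'.1 hlam'.2 hm').2.1
      have hc : (fun i => lam i + (m i : ℝ)) = (fun i => lam' i + (m' i : ℝ)) := by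
        apply coords_unique hv
        · simpa [hsum] using hsum'.symm
        · intro j
          have h1 := hΨval ⟨s, ⟨lam, hlam⟩, ⟨m, hm⟩⟩ j
          have h2 := hΨval ⟨s', ⟨lam', hlam'⟩, ⟨m', hm'⟩⟩ j
          simp only at h1 h2
          have h3 := congrFun (congrArg Subtype.val heq) j
          rw [← h1, ← h2]
          exact_mod_cast h3
      have hlameq : lam = lam' := by
        funext i
        have hci := congrFun hc i
        have e1 : lam i = Int.fract (lam i + (m i : ℝ)) := by
          rw [Int.fract_add_natCast, Int.fract_eq_self.mpr ⟨(hlam.1.1 i).1, (hlam.1.1 i).2⟩]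
        have e2 : lam' i = Int.fract (lam' i + (m' i : ℝ)) := by
          rw [Int.fract_add_natCast, Int.fract_eq_self.mpr ⟨(hlam'.1.1 i).1, (hlam'.1.1 i).2⟩]
        rw [e1, e2]
        rw [hci]
      have hmeq : m = m' := by
        funext i
        have hci := congrFun hc i
        rw [hlameq] at hci
        have : (m i : ℝ) = (m' i : ℝ) := by linarith
        exact_mod_cast this
      have hseq : s = s' := by
        apply Fin.ext
        apply @Nat.cast_injective ℝ _
        rw [← hlam.2, ← hlam'.2, hlameq]
      subst hseq; subst hlameq; subst hmeq
      rfl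
    · rintro ⟨x, hx⟩
      rw [mem_dilate_iff] at hx
      obtain ⟨c, hc0, hcs, hcx⟩ := hx
      have hfl : ∀ i, (((⌊c i⌋).toNat : ℕ) : ℝ) = ((⌊c i⌋ : ℤ) : ℝ) := by
        intro i
        have h1 : ((⌊c i⌋).toNat : ℤ) = ⌊c i⌋ := Int.toNat_of_nonneg (Int.floor_nonneg.mpr (hc0 i))
        exact_mod_cast h1
      have hcdecomp : ∀ i, c i = Int.fract (c i) + (((⌊c i⌋).toNat : ℕ) : ℝ) := by
        intro i
        rw [hfl i, Int.fract_add_floor]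
      have hlamsum : ∑ i, Int.fract (c i) = (t : ℝ) - ((∑ i, ⌊c i⌋ : ℤ) : ℝ) := by
        rw [Finset.sum_congr rfl fun i _ => (Int.self_sub_floor (c i)).symm,
          Finset.sum_sub_distrib, hcs]
        push_cast
        ring
      have hZ0 : 0 ≤ ∑ i, ⌊c i⌋ := Finset.sum_nonneg fun i _ => Int.floor_nonneg.mpr (hc0 i)
      have hZt : ∑ i, ⌊c i⌋ ≤ (t : ℤ) := by
        have h1 : (0 : ℝ) ≤ ∑ i, Int.fract (c i) := Finset.sum_nonneg fun i _ => Int.fract_nonneg _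
        rw [hlamsum, sub_nonneg] at h1
        exact_mod_cast h1
      set Z : ℤ := ∑ i, ⌊c i⌋ with hZdef
      set s : ℕ := ((t : ℤ) - Z).toNat with hsdef
      have hsval : ((s : ℕ) : ℤ) = (t : ℤ) - Z := Int.toNat_of_nonneg (by omega)
      have hst : s ≤ t := by omega
      have hmsum : ∑ i, (⌊c i⌋).toNat = t - s := by
        have hZnat : ((∑ i, (⌊c i⌋).toNat : ℕ) : ℤ) = Z := by
          rw [hZdef, Nat.cast_sum]
          exact Finset.sum_congr rfl fun i _ =>
            Int.toNat_of_nonneg (Int.floor_nonneg.mpr (hc0 i))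
        have : ((t - s : ℕ) : ℤ) = Z := by
          rw [Nat.cast_sub hst]
          omega
        omega
      have hlamsum' : ∑ i, Int.fract (c i) = (s : ℝ) := by
        rw [hlamsum]
        have h2 : ((s : ℕ) : ℝ) = (t : ℝ) - ((Z : ℤ) : ℝ) := by exact_mod_cast hsval
        linarith
      have hfpp : IsFPP V (fun i => Int.fract (c i)) := by
        refine ⟨fun i => ⟨Int.fract_nonneg _, Int.fract_lt_one _⟩,
          ⟨(t : ℤ) - Z, by rw [hlamsum]; push_cast; ring⟩, fun j => ?_⟩
        refine ⟨x j - ∑ i, ⌊c i⌋ * v i j, ?_⟩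
        have hsplit : ∑ i, Int.fract (c i) * V i j
            = ∑ i, c i * V i j - ∑ i, ((⌊c i⌋ : ℤ) : ℝ) * V i j := by
          rw [← Finset.sum_sub_distrib]
          refine Finset.sum_congr rfl fun i _ => ?_
          rw [← Int.self_sub_floor]
          ring
        rw [hsplit, hcx j]
        push_cast
        ring
      refine ⟨⟨⟨s, by omega⟩, ⟨fun i => Int.fract (c i), hfpp, hlamsum'⟩,
        ⟨fun i => (⌊c i⌋).toNat, hmsum⟩⟩, ?_⟩
      apply Subtype.ext
      funext j
      have hval := hΨval ⟨⟨s, by omega⟩, ⟨fun i => Int.fract (c i), hfpp, hlamsum'⟩,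
        ⟨fun i => (⌊c i⌋).toNat, hmsum⟩⟩ j
      simp only at hval
      have hfin : ((Ψ ⟨⟨s, by omega⟩, ⟨fun i => Int.fract (c i), hfpp, hlamsum'⟩,
          ⟨fun i => (⌊c i⌋).toNat, hmsum⟩⟩).1 j : ℝ) = (x j : ℝ) := by
        rw [hval, ← hcx j]
        exact Finset.sum_congr rfl fun i _ => by rw [← hcdecomp i]
      exact_mod_cast hfin
  haveI hFfin : ∀ s : ℕ, Fintype (F s) := by
    intro s
    have hfin : {lam : Fin (n + 1) → ℝ | IsFPP V lam ∧ ∑ i, lam i = (s : ℝ)}.Finite :=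
      (fpp_finite hv).subset fun lam hlam => hlam.1
    exact hfin.fintype
  rw [← Nat.card_congr (Equiv.ofBijective Ψ hbij)]
  rw [Nat.card_eq_fintype_card, Fintype.card_sigma, ← Fin.sum_univ_eq_sum_range]
  refine Finset.sum_congr rfl fun s _ => ?_
  rw [Fintype.card_prod]
  congr 1
  · rw [← Nat.card_eq_fintype_card]
    exact Nat.card_coe_set_eq _
  · rw [← Nat.card_eq_fintype_card, card_comp]

end Aux

theorem stmt0 {n : ℕ} (v : Fin (n + 1) → Fin n → ℤ)
    (hv : AffineIndependent ℝ fun i => fun j => ((v i j : ℤ) : ℝ)) (j : ℕ) :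
    PowerSeries.coeff j
      ((1 - PowerSeries.X : PowerSeries ℤ) ^ (n + 1) *
        ehrhartSeries (convexHull ℝ (Set.range fun i => fun j' => ((v i j' : ℤ) : ℝ)))) =
      (Set.ncard {lam : Fin (n + 1) → ℝ |
        IsFPP (fun i j' => ((v i j' : ℤ) : ℝ)) lam ∧ ∑ i, lam i = (j : ℝ)} : ℤ) := by
  classical
  set F : PowerSeries ℤ := PowerSeries.mk fun s =>
    ({lam : Fin (n + 1) → ℝ |
        IsFPP (fun i j' => ((v i j' : ℤ) : ℝ)) lam ∧ ∑ i, lam i = (s : ℝ)}.ncard : ℤ) with hF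
  have hEhr : ehrhartSeries (convexHull ℝ (Set.range fun i => fun j' => ((v i j' : ℤ) : ℝ)))
      = F * (PowerSeries.invOneSubPow ℤ (n + 1)).val := by
    ext t
    rw [PowerSeries.coeff_mul, PowerSeries.invOneSubPow_val_succ_eq_mk_add_choose]
    rw [ehrhartSeries, PowerSeries.coeff_mk]
    rw [Finset.Nat.sum_antidiagonal_eq_sum_range_succ
      (f := fun a b => (PowerSeries.coeff a) F * (PowerSeries.coeff b) (PowerSeries.mk fun k => ((n + k).choose n : ℤ)))]
    have hL : ({x : Fin n → ℤ | (fun i => (x i : ℝ)) ∈ (t : ℝ) •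
        convexHull ℝ (Set.range fun i => fun j' => ((v i j' : ℤ) : ℝ))}.ncard : ℤ)
        = (Nat.card {x : Fin n → ℤ //
        (fun i => (x i : ℝ)) ∈ (t : ℝ) • convexHull ℝ (Set.range fun i => fun j' => ((v i j' : ℤ) : ℝ))} : ℤ) := by
      rfl
    rw [hL, count_lattice hv t]
    push_cast
    refine Finset.sum_congr rfl fun s hs => ?_
    rw [hF, PowerSeries.coeff_mk, PowerSeries.coeff_mk]
  rw [hEhr, ← mul_assoc, ← PowerSeries.invOneSubPow_inv_eq_one_sub_pow]
  rw [mul_comm ((PowerSeries.invOneSubPow ℤ (n + 1)).inv) F, mul_assoc,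
    (PowerSeries.invOneSubPow ℤ (n + 1)).inv_val, mul_one]
  rw [hF, PowerSeries.coeff_mk]
end

section
/- Let P ⊆ ℝ^p be a p-dimensional lattice polytope and Q ⊆ ℝ^q a q-dimensional lattice polytope. Then, as formal power series in ℤ[[X]], (1−X)^{p+q+2}·Ehr_{P⋆Q}(X) = ((1−X)^{p+1}·Ehr_P(X)) · ((1−X)^{q+1}·Ehr_Q(X)), where P⋆Q ⊆ ℝ^{p+q+1} is the join of P and Q. -/
open scoped BigOperators Pointwise

/-- `P` is a lattice polytope: the convex hull of finitely many integer points. -/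
def IsLatticePolytope {n : ℕ} (P : Set (Fin n → ℝ)) : Prop :=
  ∃ V : Finset (Fin n → ℤ),
    P = convexHull ℝ ((fun v : Fin n → ℤ => fun i => (v i : ℝ)) '' ↑V)

/-- The join `P ⋆ Q ⊆ ℝ^{p+q+1}`. -/
noncomputable def joinPolytope {p q : ℕ} (P : Set (Fin p → ℝ)) (Q : Set (Fin q → ℝ)) :
    Set (Fin (p + q + 1) → ℝ) :=
  convexHull ℝ
    ((fun x : Fin p → ℝ =>
        Fin.append (Fin.append x (0 : Fin q → ℝ)) (fun _ : Fin 1 => (0 : ℝ))) '' P ∪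
     (fun y : Fin q → ℝ =>
        Fin.append (Fin.append (0 : Fin p → ℝ) y) (fun _ : Fin 1 => (1 : ℝ))) '' Q)

/-! ### Auxiliary material -/

namespace EhrhartJoinAux

def idxP {p q : ℕ} (i : Fin p) : Fin (p + q + 1) := Fin.castAdd 1 (Fin.castAdd q i)
def idxQ {p q : ℕ} (j : Fin q) : Fin (p + q + 1) := Fin.castAdd 1 (Fin.natAdd p j)
def idxL (p q : ℕ) : Fin (p + q + 1) := Fin.natAdd (p + q) 0

@[simp] lemma append_idxP {α} {p q : ℕ} (u : Fin p → α) (v : Fin q → α) (w : Fin 1 → α)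
    (i : Fin p) : Fin.append (Fin.append u v) w (idxP i) = u i := by
  rw [idxP, Fin.append_left, Fin.append_left]

@[simp] lemma append_idxQ {α} {p q : ℕ} (u : Fin p → α) (v : Fin q → α) (w : Fin 1 → α)
    (j : Fin q) : Fin.append (Fin.append u v) w (idxQ j) = v j := by
  rw [idxQ, Fin.append_left, Fin.append_right]

@[simp] lemma append_idxL {α} {p q : ℕ} (u : Fin p → α) (v : Fin q → α) (w : Fin 1 → α) :
    Fin.append (Fin.append u v) w (idxL p q) = w 0 := by
  rw [idxL, Fin.append_right]

lemma funSplit {α} {p q : ℕ} (z w : Fin (p + q + 1) → α)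
    (h1 : ∀ i, z (idxP i) = w (idxP i)) (h2 : ∀ j, z (idxQ j) = w (idxQ j))
    (h3 : z (idxL p q) = w (idxL p q)) : z = w := by
  funext k
  refine Fin.addCases (fun k1 => ?_) (fun k2 => ?_) k
  · refine Fin.addCases (fun i => ?_) (fun j => ?_) k1
    · exact h1 i
    · exact h2 j
  · rw [Subsingleton.elim k2 0]; exact h3

/-- The set of lattice points in the `t`-th dilate. -/
def latSet {n : ℕ} (P : Set (Fin n → ℝ)) (t : ℕ) : Set (Fin n → ℤ) :=
  {x | (fun i => (x i : ℝ)) ∈ (t : ℝ) • P}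

lemma latSet_finite {n : ℕ} {P : Set (Fin n → ℝ)} (hP : IsLatticePolytope P) (t : ℕ) :
    (latSet P t).Finite := by
  obtain ⟨V, rfl⟩ := hP
  have hcpt : IsCompact
      ((t : ℝ) • convexHull ℝ ((fun v : Fin n → ℤ => fun i => (v i : ℝ)) '' ↑V)) := by
    refine IsCompact.smul _ ?_
    exact (Set.Finite.image _ (V.finite_toSet)).isCompact_convexHull (𝕜 := ℝ)
  obtain ⟨C, hC⟩ := hcpt.isBounded.exists_norm_le
  refine Set.Finite.subset (Finset.Icc (fun _ : Fin n => -⌈C⌉) (fun _ => ⌈C⌉)).finite_toSet ?_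
  intro x hx
  have hx' : ∀ i, |(x i : ℝ)| ≤ C := by
    intro i
    have h1 := norm_le_pi_norm (fun i => (x i : ℝ)) i
    rw [Real.norm_eq_abs] at h1
    exact le_trans h1 (hC _ hx)
  simp only [Finset.coe_Icc, Set.mem_Icc, Pi.le_def]
  constructor <;> intro i
  · have : (-C : ℝ) ≤ (x i : ℝ) := neg_le_of_abs_le (hx' i)
    have h2 : ((-⌈C⌉ : ℤ) : ℝ) ≤ (x i : ℝ) := by
      push_cast
      linarith [Int.le_ceil C]
    exact_mod_cast h2
  · have : ((x i : ℤ) : ℝ) ≤ ((⌈C⌉ : ℤ) : ℝ) := le_trans (le_of_abs_le (hx' i)) (Int.le_ceil C)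
    exact_mod_cast this

section memb
variable {p q : ℕ} {P : Set (Fin p → ℝ)} {Q : Set (Fin q → ℝ)}

lemma convex_A (hPc : Convex ℝ P) :
    Convex ℝ ((fun x : Fin p → ℝ =>
      Fin.append (Fin.append x (0 : Fin q → ℝ)) (fun _ : Fin 1 => (0 : ℝ))) '' P) := by
  rintro _ ⟨x₁, h₁, rfl⟩ _ ⟨x₂, h₂, rfl⟩ a b ha hb hab
  refine ⟨a • x₁ + b • x₂, hPc h₁ h₂ ha hb hab, ?_⟩
  refine funSplit _ _ (fun i => ?_) (fun j => ?_) ?_ <;>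
    simp [Pi.add_apply, Pi.smul_apply, smul_eq_mul, mul_zero]

lemma convex_B (hQc : Convex ℝ Q) :
    Convex ℝ ((fun y : Fin q → ℝ =>
      Fin.append (Fin.append (0 : Fin p → ℝ) y) (fun _ : Fin 1 => (1 : ℝ))) '' Q) := by
  rintro _ ⟨y₁, h₁, rfl⟩ _ ⟨y₂, h₂, rfl⟩ a b ha hb hab
  refine ⟨a • y₁ + b • y₂, hQc h₁ h₂ ha hb hab, ?_⟩
  refine funSplit _ _ (fun i => ?_) (fun j => ?_) ?_ <;>
    simp [Pi.add_apply, Pi.smul_apply, smul_eq_mul, mul_zero, hab]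

lemma mem_smul_join (hPc : Convex ℝ P) (hQc : Convex ℝ Q)
    (hP0 : P.Nonempty) (hQ0 : Q.Nonempty) (t : ℝ) (ht : 0 ≤ t) (z : Fin (p + q + 1) → ℝ) :
    z ∈ t • joinPolytope P Q ↔
      ∃ a b : ℝ, 0 ≤ a ∧ 0 ≤ b ∧ a + b = t ∧ z (idxL p q) = b ∧
        (fun i => z (idxP i)) ∈ a • P ∧ (fun j => z (idxQ j)) ∈ b • Q := by
  set f : (Fin p → ℝ) → (Fin (p + q + 1) → ℝ) := fun x =>
    Fin.append (Fin.append x (0 : Fin q → ℝ)) (fun _ : Fin 1 => (0 : ℝ)) with hf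
  set g : (Fin q → ℝ) → (Fin (p + q + 1) → ℝ) := fun y =>
    Fin.append (Fin.append (0 : Fin p → ℝ) y) (fun _ : Fin 1 => (1 : ℝ)) with hg
  have hjoin : joinPolytope P Q = convexJoin ℝ (f '' P) (g '' Q) :=
    (convex_A hPc).convexHull_union (convex_B hQc) (hP0.image f) (hQ0.image g)
  constructor
  · rintro ⟨w, hw, rfl⟩
    rw [hjoin, mem_convexJoin] at hw
    obtain ⟨u, ⟨x, hx, rfl⟩, v, ⟨y, hy, rfl⟩, a', b', ha', hb', hab', rfl⟩ := hw
    refine ⟨t * a', t * b', by positivity, by positivity, by nlinarith, ?_, ?_, ?_⟩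
    · simp [hf, hg, Pi.smul_apply, Pi.add_apply, smul_eq_mul]
    · refine ⟨x, hx, ?_⟩
      funext i
      simp [hf, hg, Pi.smul_apply, Pi.add_apply, smul_eq_mul]
      ring
    · refine ⟨y, hy, ?_⟩
      funext j
      simp [hf, hg, Pi.smul_apply, Pi.add_apply, smul_eq_mul]
      ring
  · rintro ⟨a, b, ha, hb, hab, hzL, ⟨x, hx, hxe⟩, ⟨y, hy, hye⟩⟩
    have hz : z = a • f x + b • g y := by
      refine funSplit _ _ (fun i => ?_) (fun j => ?_) ?_
      · have := congrFun hxe i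
        simp only [Pi.smul_apply, smul_eq_mul] at this
        simp [hf, hg, Pi.add_apply, Pi.smul_apply, smul_eq_mul, ← this]
      · have := congrFun hye j
        simp only [Pi.smul_apply, smul_eq_mul] at this
        simp [hf, hg, Pi.add_apply, Pi.smul_apply, smul_eq_mul, ← this]
      · simp [hf, hg, Pi.add_apply, Pi.smul_apply, smul_eq_mul, hzL]
    rcases eq_or_lt_of_le ht with ht0 | htpos
    · have ha0 : a = 0 := by linarith
      have hb0 : b = 0 := by linarith
      have hz0 : z = 0 := by rw [hz, ha0, hb0]; simp
      rw [← ht0, hz0]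
      have hne : (joinPolytope P Q).Nonempty := ⟨f x, subset_convexHull ℝ _ (Or.inl ⟨x, hx, rfl⟩)⟩
      rw [Set.zero_smul_set hne]
      exact rfl
    · refine ⟨(a / t) • f x + (b / t) • g y, ?_, ?_⟩
      · rw [hjoin, mem_convexJoin]
        exact ⟨f x, ⟨x, hx, rfl⟩, g y, ⟨y, hy, rfl⟩, a / t, b / t,
          by positivity, by positivity, by field_simp; linarith, rfl⟩
      · show t • ((a / t) • f x + (b / t) • g y) = z
        rw [hz, smul_add, smul_smul, smul_smul, mul_div_cancel₀ _ htpos.ne',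
          mul_div_cancel₀ _ htpos.ne']

end memb

lemma my_ncard_biUnion {α β : Type*} (s : Finset α) (f : α → Set β)
    (hf : ∀ a ∈ s, (f a).Finite) (hd : (s : Set α).PairwiseDisjoint f) :
    (⋃ a ∈ s, f a).ncard = ∑ a ∈ s, (f a).ncard := by
  classical
  induction s using Finset.induction_on with
  | empty => simp
  | @insert a s ha ih =>
    have h2 : (⋃ x ∈ s, f x).Finite := by
      rw [← Finset.set_biUnion_coe]
      exact Set.Finite.biUnion s.finite_toSet fun i hi => hf i (Finset.mem_insert_of_mem hi)
    have hdis : Disjoint (f a) (⋃ x ∈ s, f x) := by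
      rw [Set.disjoint_iUnion₂_right]
      intro i hi
      exact hd (Finset.mem_insert_self a s) (Finset.mem_insert_of_mem hi)
        (fun h => ha (h ▸ hi))
    rw [Finset.set_biUnion_insert, Finset.sum_insert ha,
      Set.ncard_union_eq hdis (hf a (Finset.mem_insert_self a s)) h2,
      ih (fun i hi => hf i (Finset.mem_insert_of_mem hi))
        (hd.subset (by simp [Set.subset_def]; tauto))]

lemma my_ncard_prod {α β : Type*} (s : Set α) (t : Set β) :
    (s ×ˢ t).ncard = s.ncard * t.ncard := by
  rw [← Nat.card_coe_set_eq, ← Nat.card_coe_set_eq, ← Nat.card_coe_set_eq,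
    ← Nat.card_prod]
  exact Nat.card_congr (Equiv.Set.prod s t)

section count
variable {p q : ℕ} {P : Set (Fin p → ℝ)} {Q : Set (Fin q → ℝ)}

/-- The embedding of a pair of lattice points at level `j`. -/
def emb (p q : ℕ) (j : ℕ) (xy : (Fin p → ℤ) × (Fin q → ℤ)) : Fin (p + q + 1) → ℤ :=
  Fin.append (Fin.append xy.1 xy.2) (fun _ => (j : ℤ))

lemma emb_injective (j : ℕ) : Function.Injective (emb p q j) := by
  intro xy xy' h
  have h1 : xy.1 = xy'.1 := by
    funext i
    have := congrFun h (idxP i)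
    simpa [emb] using this
  have h2 : xy.2 = xy'.2 := by
    funext i
    have := congrFun h (idxQ i)
    simpa [emb] using this
  exact Prod.ext h1 h2

lemma count_join (hP : IsLatticePolytope P) (hQ : IsLatticePolytope Q)
    (hPc : Convex ℝ P) (hQc : Convex ℝ Q) (hP0 : P.Nonempty) (hQ0 : Q.Nonempty) (t : ℕ) :
    (latSet (joinPolytope P Q) t).ncard =
      ∑ ij ∈ Finset.HasAntidiagonal.antidiagonal t, (latSet P ij.1).ncard * (latSet Q ij.2).ncard := by
  classical
  set E : ℕ × ℕ → Set (Fin (p + q + 1) → ℤ) :=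
    fun ij => emb p q ij.2 '' (latSet P ij.1 ×ˢ latSet Q ij.2) with hE
  have hunion : latSet (joinPolytope P Q) t = ⋃ ij ∈ Finset.HasAntidiagonal.antidiagonal t, E ij := by
    ext z
    simp only [latSet, Set.mem_setOf_eq, Set.mem_iUnion, Finset.mem_coe,
      Finset.HasAntidiagonal.mem_antidiagonal, exists_prop]
    rw [mem_smul_join hPc hQc hP0 hQ0 (t : ℝ) (by positivity)]
    constructor
    · rintro ⟨a, b, ha, hb, hab, hzL, hxP, hyQ⟩
      have hbz : ((z (idxL p q) : ℤ) : ℝ) = b := hzL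
      have hz0 : 0 ≤ z (idxL p q) := by exact_mod_cast hbz ▸ hb
      set j : ℕ := (z (idxL p q)).toNat with hj
      have hjz : (j : ℤ) = z (idxL p q) := Int.toNat_of_nonneg hz0
      have hjb : (j : ℝ) = b := by
        rw [← hbz]
        exact_mod_cast hjz
      have hjt : j ≤ t := by
        have : (j : ℝ) ≤ (t : ℝ) := by rw [hjb]; linarith
        exact_mod_cast this
      refine ⟨(t - j, j), by simp; omega, ?_⟩
      refine ⟨(fun i => z (idxP i), fun j' => z (idxQ j')), ⟨?_, ?_⟩, ?_⟩
      · show (fun i => ((z (idxP i) : ℤ) : ℝ)) ∈ ((t - j : ℕ) : ℝ) • P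
        have hcast : ((t - j : ℕ) : ℝ) = a := by
          push_cast [Nat.cast_sub hjt]
          linarith [hjb]
        rw [hcast]
        exact hxP
      · show (fun j' => ((z (idxQ j') : ℤ) : ℝ)) ∈ ((j : ℕ) : ℝ) • Q
        rw [hjb]
        exact hyQ
      · refine funSplit _ _ (fun i => ?_) (fun j' => ?_) ?_ <;> simp [emb]
        rw [hj, Int.toNat_of_nonneg hz0]
    · rintro ⟨ij, hij, ⟨xy, ⟨hx, hy⟩, rfl⟩⟩
      refine ⟨ij.1, ij.2, by positivity, by positivity, by exact_mod_cast hij, ?_, ?_, ?_⟩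
      · simp [emb]
      · have : (fun i => ((emb p q ij.2 xy) (idxP i) : ℝ)) = fun i => (xy.1 i : ℝ) := by
          funext i; simp [emb]
        rw [this]
        exact hx
      · have : (fun j' => ((emb p q ij.2 xy) (idxQ j') : ℝ)) = fun j' => (xy.2 j' : ℝ) := by
          funext j'; simp [emb]
        rw [this]
        exact hy
  rw [hunion, my_ncard_biUnion]
  · refine Finset.sum_congr rfl fun ij _ => ?_
    rw [hE]
    rw [Set.ncard_image_of_injective _ (emb_injective ij.2), my_ncard_prod]
  · intro ij _
    exact ((latSet_finite hP ij.1).prod (latSet_finite hQ ij.2)).image _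
  · intro ij hij kl hkl hne
    simp only [Function.onFun]
    rw [Set.disjoint_left]
    rintro z ⟨xy, _, rfl⟩ ⟨xy', _, h⟩
    apply hne
    have hL := congrFun h (idxL p q)
    simp [emb] at hL
    have h2 : kl.2 = ij.2 := by exact_mod_cast hL
    simp only [Finset.mem_coe, Finset.HasAntidiagonal.mem_antidiagonal] at hij hkl
    have : kl.1 = ij.1 := by omega
    exact Prod.ext this.symm h2.symm ▸ rfl

end count

end EhrhartJoinAux

open EhrhartJoinAux in
theorem stmt1 {p q : ℕ} (P : Set (Fin p → ℝ)) (Q : Set (Fin q → ℝ))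
    (hP : IsLatticePolytope P) (hPfull : affineSpan ℝ P = ⊤)
    (hQ : IsLatticePolytope Q) (hQfull : affineSpan ℝ Q = ⊤) :
    (1 - PowerSeries.X : PowerSeries ℤ) ^ (p + q + 2) * ehrhartSeries (joinPolytope P Q) =
      ((1 - PowerSeries.X) ^ (p + 1) * ehrhartSeries P) *
        ((1 - PowerSeries.X) ^ (q + 1) * ehrhartSeries Q) := by
  have hP0 : P.Nonempty := by
    rw [← affineSpan_nonempty (k := ℝ), hPfull]
    exact ⟨0, trivial⟩
  have hQ0 : Q.Nonempty := by
    rw [← affineSpan_nonempty (k := ℝ), hQfull]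
    exact ⟨0, trivial⟩
  have hPc : Convex ℝ P := by
    obtain ⟨V, hV⟩ := hP; rw [hV]; exact convex_convexHull ℝ _
  have hQc : Convex ℝ Q := by
    obtain ⟨V, hV⟩ := hQ; rw [hV]; exact convex_convexHull ℝ _
  have key : ehrhartSeries (joinPolytope P Q) = ehrhartSeries P * ehrhartSeries Q := by
    ext t
    rw [PowerSeries.coeff_mul]
    simp only [ehrhartSeries, PowerSeries.coeff_mk]
    rw [show {x : Fin (p + q + 1) → ℤ | (fun i => (x i : ℝ)) ∈ (t : ℝ) • joinPolytope P Q}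
        = latSet (joinPolytope P Q) t from rfl,
      count_join hP hQ hPc hQc hP0 hQ0 t]
    push_cast
    rfl
  rw [key, show p + q + 2 = (p + 1) + (q + 1) by ring, pow_add]
  ring
end

section
/- Let (P_i)_{i≥0} be a sequence where P_i ⊆ ℝ^{p_i} is a p_i-dimensional lattice polytope, and (Q_i)_{i≥0} a sequence where Q_i ⊆ ℝ^{q_i} is a q_i-dimensional lattice polytope. Suppose there exist formal power series f, g ∈ ℤ[[X]] such that for every j ≥ 0 the coefficient of X^j in (1−X)^{p_i+1}·Ehr_{P_i}(X) equals the X^j-coefficient of f for all sufficiently large i, and the coefficient of X^j in (1−X)^{q_i+1}·Ehr_{Q_i}(X) equals the X^j-coefficient of g for all sufficiently large i. Then for every j ≥ 0, the coefficient of X^j in (1−X)^{p_i+q_i+2}·Ehr_{P_i⋆Q_i}(X) equals the X^j-coefficient of the product f·g for all sufficiently large i. -/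
open scoped BigOperators Pointwise

namespace Stmt2Aux

open Set Bornology

def castFn {n : ℕ} (x : Fin n → ℤ) : Fin n → ℝ := fun i => (x i : ℝ)

lemma lattice_finite {n : ℕ} {B : Set (Fin n → ℝ)} (hB : IsBounded B) :
    {x : Fin n → ℤ | castFn x ∈ B}.Finite := by
  obtain ⟨R, hR⟩ := isBounded_iff_forall_norm_le.1 hB
  apply Set.Finite.subset (Set.Finite.pi (fun i : Fin n => Set.finite_Icc (-⌈R⌉) ⌈R⌉))
  intro x hx
  rw [Set.mem_univ_pi]
  intro i
  have h1 : ‖castFn x i‖ ≤ R := le_trans (norm_le_pi_norm _ i) (hR _ hx)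
  have h2 : |(x i : ℝ)| ≤ (⌈R⌉ : ℝ) := le_trans h1 (Int.le_ceil R)
  have h3 : |x i| ≤ ⌈R⌉ := by
    have : ((|x i| : ℤ) : ℝ) ≤ ((⌈R⌉ : ℤ) : ℝ) := by push_cast; exact h2
    exact_mod_cast this
  exact Set.mem_Icc.2 (abs_le.1 h3)

variable {p q : ℕ}

def idxL (q : ℕ) (i : Fin p) : Fin (p + q + 1) := Fin.castAdd 1 (Fin.castAdd q i)
def idxM (p : ℕ) (i : Fin q) : Fin (p + q + 1) := Fin.castAdd 1 (Fin.natAdd p i)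
def idxR (p q : ℕ) : Fin (p + q + 1) := Fin.natAdd (p + q) (0 : Fin 1)

section eval
variable {α : Type*} (a : Fin p → α) (b : Fin q → α) (c : Fin 1 → α)

lemma appL (i : Fin p) : Fin.append (Fin.append a b) c (idxL q i) = a i := by
  simp [idxL, Fin.append_left]

lemma appM (i : Fin q) : Fin.append (Fin.append a b) c (idxM p i) = b i := by
  simp [idxM, Fin.append_left, Fin.append_right]

lemma appR : Fin.append (Fin.append a b) c (idxR p q) = c 0 := by
  simp [idxR, Fin.append_right]

lemma fin_ext {f g : Fin (p + q + 1) → α}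
    (h1 : ∀ i, f (idxL q i) = g (idxL q i)) (h2 : ∀ i, f (idxM p i) = g (idxM p i))
    (h3 : f (idxR p q) = g (idxR p q)) : f = g := by
  funext j
  refine Fin.addCases (fun j => ?_) (fun j => ?_) j
  · exact Fin.addCases (fun i => h1 i) (fun i => h2 i) j
  · have : j = 0 := Subsingleton.elim _ _
    subst this; exact h3

end eval

def emb1 (p q : ℕ) (x : Fin p → ℝ) : Fin (p + q + 1) → ℝ :=
  Fin.append (Fin.append x (0 : Fin q → ℝ)) (fun _ : Fin 1 => (0 : ℝ))

def emb2 (p q : ℕ) (y : Fin q → ℝ) : Fin (p + q + 1) → ℝ :=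
  Fin.append (Fin.append (0 : Fin p → ℝ) y) (fun _ : Fin 1 => (1 : ℝ))

def glue (p q : ℕ) (h : ℕ) (ab : (Fin p → ℤ) × (Fin q → ℤ)) : Fin (p + q + 1) → ℤ :=
  Fin.append (Fin.append ab.1 ab.2) (fun _ : Fin 1 => (h : ℤ))

lemma emb1_combo (s t : ℝ) (x y : Fin p → ℝ) :
    s • emb1 p q x + t • emb1 p q y = emb1 p q (s • x + t • y) := by
  apply fin_ext <;> simp [emb1, appL, appM, appR]

lemma emb2_combo (s t : ℝ) (hst : s + t = 1) (x y : Fin q → ℝ) :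
    s • emb2 p q x + t • emb2 p q y = emb2 p q (s • x + t • y) := by
  apply fin_ext <;> simp [emb2, appL, appM, appR, hst]

lemma convex_emb1_image {P : Set (Fin p → ℝ)} (hP : Convex ℝ P) :
    Convex ℝ (emb1 p q '' P) := by
  rintro _ ⟨x, hx, rfl⟩ _ ⟨y, hy, rfl⟩ s t hs ht hst
  exact ⟨s • x + t • y, hP hx hy hs ht hst, (emb1_combo s t x y).symm⟩

lemma convex_emb2_image {Q : Set (Fin q → ℝ)} (hQ : Convex ℝ Q) :
    Convex ℝ (emb2 p q '' Q) := by
  rintro _ ⟨x, hx, rfl⟩ _ ⟨y, hy, rfl⟩ s t hs ht hst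
  exact ⟨s • x + t • y, hQ hx hy hs ht hst, (emb2_combo s t hst x y).symm⟩

lemma mem_join_iff {P : Set (Fin p → ℝ)} {Q : Set (Fin q → ℝ)}
    (hPc : Convex ℝ P) (hQc : Convex ℝ Q) (hPne : P.Nonempty) (hQne : Q.Nonempty)
    {z : Fin (p + q + 1) → ℝ} :
    z ∈ joinPolytope P Q ↔
      ∃ a ∈ P, ∃ b ∈ Q, ∃ u v : ℝ, 0 ≤ u ∧ 0 ≤ v ∧ u + v = 1 ∧
        u • emb1 p q a + v • emb2 p q b = z := by
  have hJ : joinPolytope P Q = convexJoin ℝ (emb1 p q '' P) (emb2 p q '' Q) := by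
    show convexHull ℝ (emb1 p q '' P ∪ emb2 p q '' Q) = _
    rw [convexHull_union (hPne.image _) (hQne.image _),
      (convex_emb1_image hPc).convexHull_eq, (convex_emb2_image hQc).convexHull_eq]
  rw [hJ, mem_convexJoin]
  constructor
  · rintro ⟨_, ⟨a, ha, rfl⟩, _, ⟨b, hb, rfl⟩, u, v, hu, hv, huv, hz⟩
    exact ⟨a, ha, b, hb, u, v, hu, hv, huv, hz⟩
  · rintro ⟨a, ha, b, hb, u, v, hu, hv, huv, hz⟩
    exact ⟨_, ⟨a, ha, rfl⟩, _, ⟨b, hb, rfl⟩, u, v, hu, hv, huv, hz⟩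

end Stmt2Aux

namespace Stmt2Aux

open Set Bornology

variable {p q : ℕ}

lemma polytope_isBounded {n : ℕ} {P : Set (Fin n → ℝ)} (hP : IsLatticePolytope P) :
    IsBounded P := by
  obtain ⟨V, rfl⟩ := hP
  exact isBounded_convexHull.2 ((V.finite_toSet.image _).isBounded)

lemma norm_append_le {C : ℝ} (hC : 0 ≤ C) (a : Fin p → ℝ) (b : Fin q → ℝ) (c : Fin 1 → ℝ)
    (ha : ∀ i, |a i| ≤ C) (hb : ∀ i, |b i| ≤ C) (hc : |c 0| ≤ C) :
    ‖Fin.append (Fin.append a b) c‖ ≤ C := by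
  rw [pi_norm_le_iff_of_nonneg hC]
  intro j
  refine Fin.addCases (fun j => ?_) (fun j => ?_) j
  · rw [Fin.append_left]
    refine Fin.addCases (fun i => ?_) (fun i => ?_) j
    · rw [Fin.append_left, Real.norm_eq_abs]; exact ha i
    · rw [Fin.append_right, Real.norm_eq_abs]; exact hb i
  · rw [Fin.append_right, Real.norm_eq_abs]
    have : j = 0 := Subsingleton.elim _ _
    rw [this]; exact hc

lemma join_isBounded {P : Set (Fin p → ℝ)} {Q : Set (Fin q → ℝ)}
    (hPb : IsBounded P) (hQb : IsBounded Q) : IsBounded (joinPolytope P Q) := by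
  obtain ⟨RP, hRP⟩ := isBounded_iff_forall_norm_le.1 hPb
  obtain ⟨RQ, hRQ⟩ := isBounded_iff_forall_norm_le.1 hQb
  set C : ℝ := max (max RP RQ) 1 with hCdef
  have hC0 : (0:ℝ) ≤ C := le_trans zero_le_one (le_max_right _ _)
  have hC1 : (1:ℝ) ≤ C := le_max_right _ _
  apply isBounded_convexHull.2
  apply IsBounded.union <;> rw [isBounded_iff_forall_norm_le]
  · refine ⟨C, ?_⟩
    rintro _ ⟨x, hx, rfl⟩
    refine norm_append_le hC0 _ _ _ (fun i => ?_) (fun i => by simpa using hC0)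
      (by simpa using hC0)
    calc |x i| ≤ ‖x‖ := by rw [← Real.norm_eq_abs]; exact norm_le_pi_norm x i
    _ ≤ RP := hRP x hx
    _ ≤ C := le_trans (le_max_left _ _) (le_max_left _ _)
  · refine ⟨C, ?_⟩
    rintro _ ⟨y, hy, rfl⟩
    refine norm_append_le hC0 _ _ _ (fun i => by simpa using hC0) (fun i => ?_)
      (by simpa using hC1)
    calc |y i| ≤ ‖y‖ := by rw [← Real.norm_eq_abs]; exact norm_le_pi_norm y i
    _ ≤ RQ := hRQ y hy
    _ ≤ C := le_trans (le_max_right _ _) (le_max_left _ _)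

lemma mem_smul_join_iff {P : Set (Fin p → ℝ)} {Q : Set (Fin q → ℝ)}
    (hPc : Convex ℝ P) (hQc : Convex ℝ Q) (hPne : P.Nonempty) (hQne : Q.Nonempty)
    (t : ℕ) (x : Fin (p + q + 1) → ℤ) :
    castFn x ∈ (t : ℝ) • joinPolytope P Q ↔
      ∃ s h : ℕ, s + h = t ∧ ∃ a b, (castFn a ∈ (s : ℝ) • P ∧ castFn b ∈ (h : ℝ) • Q) ∧
        glue p q h (a, b) = x := by
  constructor
  · intro hx
    obtain ⟨z, hzJ, hz⟩ := Set.mem_smul_set.1 hx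
    obtain ⟨a, ha, b, hb, u, v, hu, hv, huv, hzw⟩ := (mem_join_iff hPc hQc hPne hQne).1 hzJ
    have hzR : z (idxR p q) = v := by
      have := congrFun hzw (idxR p q)
      simpa [emb1, emb2, appR] using this.symm
    have hxR : (x (idxR p q) : ℝ) = t * v := by
      have := congrFun hz (idxR p q)
      simp only [Pi.smul_apply, smul_eq_mul, castFn] at this
      rw [← this, hzR]
    have hv1 : v ≤ 1 := by linarith
    have htv0 : (0:ℝ) ≤ t * v := by positivity
    have hxR0 : 0 ≤ x (idxR p q) := by exact_mod_cast hxR ▸ htv0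
    set hn : ℕ := (x (idxR p q)).toNat with hhn
    have hncast : (hn : ℝ) = t * v := by
      rw [hhn]
      rw [show ((((x (idxR p q)).toNat : ℕ)) : ℝ) = (((x (idxR p q)).toNat : ℤ) : ℝ) by push_cast; ring,
        Int.toNat_of_nonneg hxR0, hxR]
    have hnle : hn ≤ t := by
      have : (hn : ℝ) ≤ (t : ℝ) := by rw [hncast]; nlinarith
      exact_mod_cast this
    refine ⟨t - hn, hn, by omega, (fun i => x (idxL q i)), (fun i => x (idxM p i)), ⟨?_, ?_⟩, ?_⟩
    · have hsub : ((t - hn : ℕ) : ℝ) = t * u := by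
        push_cast [hnle]; rw [hncast]; nlinarith
      have : castFn (fun i => x (idxL q i)) = ((t - hn : ℕ) : ℝ) • a := by
        funext i
        have h1 := congrFun hz (idxL q i)
        have h2 := congrFun hzw (idxL q i)
        simp only [Pi.smul_apply, smul_eq_mul, castFn, Pi.add_apply] at h1 h2 ⊢
        rw [hsub]
        rw [← h1, ← h2]
        simp [emb1, emb2, appL]
        ring
      rw [this]
      exact Set.smul_mem_smul_set ha
    · have : castFn (fun i => x (idxM p i)) = (hn : ℝ) • b := by
        funext i
        have h1 := congrFun hz (idxM p i)
        have h2 := congrFun hzw (idxM p i)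
        simp only [Pi.smul_apply, smul_eq_mul, castFn, Pi.add_apply] at h1 h2 ⊢
        rw [hncast, ← h1, ← h2]
        simp [emb1, emb2, appM]
        ring
      rw [this]
      exact Set.smul_mem_smul_set hb
    · apply fin_ext
      · intro i; simp [glue, appL]
      · intro i; simp [glue, appM]
      · simp only [glue, appR]
        exact (Int.toNat_of_nonneg hxR0)
  · rintro ⟨s, h, hsh, a, b, ⟨haM, hbM⟩, rfl⟩
    obtain ⟨a', ha', haa⟩ := Set.mem_smul_set.1 haM
    obtain ⟨b', hb', hbb⟩ := Set.mem_smul_set.1 hbM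
    by_cases ht : t = 0
    · subst ht
      have hs0 : s = 0 := by omega
      have hh0 : h = 0 := by omega
      subst hs0; subst hh0
      rw [Set.mem_smul_set]
      refine ⟨emb1 p q a', ?_, ?_⟩
      · exact subset_convexHull ℝ _ (Set.mem_union_left _ ⟨a', ha', rfl⟩)
      · apply fin_ext <;> simp only [Pi.smul_apply, smul_eq_mul, castFn]
        · intro i
          have := congrFun haa i
          simp only [Pi.smul_apply, smul_eq_mul] at this
          simp only [castFn] at this
          simp [glue, appL, ← this]
        · intro i
          have := congrFun hbb i
          simp only [Pi.smul_apply, smul_eq_mul] at this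
          simp only [castFn] at this
          simp [glue, appM, ← this]
        · simp [glue, appR]
    · have ht0 : (0:ℝ) < t := by exact_mod_cast Nat.pos_of_ne_zero ht
      set u : ℝ := (s : ℝ) / t with hu
      set v : ℝ := (h : ℝ) / t with hv
      have huv : u + v = 1 := by
        rw [hu, hv, ← add_div]
        rw [div_eq_one_iff_eq (ne_of_gt ht0)]
        exact_mod_cast hsh
      refine Set.mem_smul_set.2 ⟨u • emb1 p q a' + v • emb2 p q b',
        (mem_join_iff hPc hQc hPne hQne).2
          ⟨a', ha', b', hb', u, v, by positivity, by positivity, huv, rfl⟩, ?_⟩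
      apply fin_ext <;>
        simp only [Pi.smul_apply, Pi.add_apply, smul_eq_mul, castFn, glue, emb1, emb2,
          appL, appM, appR, Pi.zero_apply, mul_zero, add_zero, zero_add, mul_one]
      · intro i
        have := congrFun haa i
        simp only [Pi.smul_apply, smul_eq_mul, castFn] at this
        rw [← this, hu]
        field_simp
      · intro i
        have := congrFun hbb i
        simp only [Pi.smul_apply, smul_eq_mul, castFn] at this
        rw [← this, hv]
        field_simp
      · rw [hv]
        push_cast
        field_simp

end Stmt2Aux

namespace Stmt2Aux

open Set Bornology

variable {p q : ℕ}

lemma glue_injective (h : ℕ) : Function.Injective (glue p q h) := by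
  intro ab ab' he
  have h1 : ab.1 = ab'.1 := funext fun i => by
    have := congrFun he (idxL q i); simpa [glue, appL] using this
  have h2 : ab.2 = ab'.2 := funext fun i => by
    have := congrFun he (idxM p i); simpa [glue, appM] using this
  exact Prod.ext h1 h2

lemma nonempty_of_span {n : ℕ} {P : Set (Fin n → ℝ)} (h : affineSpan ℝ P = ⊤) :
    P.Nonempty := by
  by_contra he
  rw [Set.not_nonempty_iff_eq_empty] at he
  subst he
  rw [(affineSpan_eq_bot ℝ).2 rfl] at h
  have : (0 : Fin n → ℝ) ∈ (⊥ : AffineSubspace ℝ (Fin n → ℝ)) :=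
    h ▸ AffineSubspace.mem_top ℝ _ _
  exact AffineSubspace.notMem_bot ℝ (Fin n → ℝ) _ this

lemma convex_of_lattice {n : ℕ} {P : Set (Fin n → ℝ)} (hP : IsLatticePolytope P) :
    Convex ℝ P := by
  obtain ⟨V, rfl⟩ := hP
  exact convex_convexHull ℝ _

lemma ehr_join {P : Set (Fin p → ℝ)} {Q : Set (Fin q → ℝ)}
    (hP : IsLatticePolytope P) (hPs : affineSpan ℝ P = ⊤)
    (hQ : IsLatticePolytope Q) (hQs : affineSpan ℝ Q = ⊤) :
    ehrhartSeries (joinPolytope P Q) = ehrhartSeries P * ehrhartSeries Q := by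
  have hPc := convex_of_lattice hP
  have hQc := convex_of_lattice hQ
  have hPne := nonempty_of_span hPs
  have hQne := nonempty_of_span hQs
  have hPb := polytope_isBounded hP
  have hQb := polytope_isBounded hQ
  ext t
  rw [PowerSeries.coeff_mul]
  simp only [ehrhartSeries, PowerSeries.coeff_mk]
  have hSf : {x : Fin (p + q + 1) → ℤ |
      (fun i => (x i : ℝ)) ∈ (t : ℝ) • joinPolytope P Q}.Finite :=
    lattice_finite ((join_isBounded hPb hQb).smul₀ _)
  have hAf : ∀ s : ℕ, {a : Fin p → ℤ | (fun i => (a i : ℝ)) ∈ (s : ℝ) • P}.Finite :=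
    fun s => lattice_finite (hPb.smul₀ _)
  have hBf : ∀ s : ℕ, {b : Fin q → ℤ | (fun i => (b i : ℝ)) ∈ (s : ℝ) • Q}.Finite :=
    fun s => lattice_finite (hQb.smul₀ _)
  classical
  have key : hSf.toFinset = (Finset.HasAntidiagonal.antidiagonal t).biUnion
      (fun sh => ((hAf sh.1).toFinset ×ˢ (hBf sh.2).toFinset).image (glue p q sh.2)) := by
    ext x
    simp only [Set.Finite.mem_toFinset, Finset.mem_biUnion, Finset.mem_image,
      Finset.mem_product, Finset.HasAntidiagonal.mem_antidiagonal, Set.Finite.mem_toFinset,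
      Set.mem_setOf_eq, Prod.exists]
    rw [show (fun i => ((x i : ℝ))) = castFn x from rfl,
      mem_smul_join_iff hPc hQc hPne hQne]
    tauto
  have hdisj : ∀ sh ∈ Finset.HasAntidiagonal.antidiagonal t, ∀ sh' ∈ Finset.HasAntidiagonal.antidiagonal t, sh ≠ sh' →
      Disjoint (((hAf sh.1).toFinset ×ˢ (hBf sh.2).toFinset).image (glue p q sh.2))
        (((hAf sh'.1).toFinset ×ˢ (hBf sh'.2).toFinset).image (glue p q sh'.2)) := by
    intro sh hsh sh' hsh' hne
    rw [Finset.disjoint_left]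
    rintro x hx hx'
    obtain ⟨ab, -, rfl⟩ := Finset.mem_image.1 hx
    obtain ⟨ab', -, he⟩ := Finset.mem_image.1 hx'
    have := congrFun he (idxR p q)
    simp only [glue, appR, Nat.cast_inj] at this
    apply hne
    rw [Finset.HasAntidiagonal.mem_antidiagonal] at hsh hsh'
    have h2 : sh'.2 = sh.2 := this
    have h1 : sh.1 = sh'.1 := by omega
    exact Prod.ext h1 h2.symm
  rw [Set.ncard_eq_toFinset_card _ hSf, key, Finset.card_biUnion hdisj]
  push_cast
  apply Finset.sum_congr rfl
  intro sh _
  rw [Finset.card_image_of_injective _ (glue_injective _), Finset.card_product,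
    ← Set.ncard_eq_toFinset_card _ (hAf sh.1), ← Set.ncard_eq_toFinset_card _ (hBf sh.2)]
  push_cast
  ring

end Stmt2Aux

theorem stmt2 (p q : ℕ → ℕ)
    (P : ∀ i : ℕ, Set (Fin (p i) → ℝ)) (Q : ∀ i : ℕ, Set (Fin (q i) → ℝ))
    (hP : ∀ i, IsLatticePolytope (P i) ∧ affineSpan ℝ (P i) = ⊤)
    (hQ : ∀ i, IsLatticePolytope (Q i) ∧ affineSpan ℝ (Q i) = ⊤)
    (f g : PowerSeries ℤ)
    (hf : ∀ j : ℕ, ∃ N : ℕ, ∀ i : ℕ, N ≤ i →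
      PowerSeries.coeff (R := ℤ) j
        ((1 - PowerSeries.X) ^ (p i + 1) * ehrhartSeries (P i)) = PowerSeries.coeff (R := ℤ) j f)
    (hg : ∀ j : ℕ, ∃ N : ℕ, ∀ i : ℕ, N ≤ i →
      PowerSeries.coeff (R := ℤ) j
        ((1 - PowerSeries.X) ^ (q i + 1) * ehrhartSeries (Q i)) = PowerSeries.coeff (R := ℤ) j g) :
    ∀ j : ℕ, ∃ N : ℕ, ∀ i : ℕ, N ≤ i →
      PowerSeries.coeff (R := ℤ) j
        ((1 - PowerSeries.X) ^ (p i + q i + 2) * ehrhartSeries (joinPolytope (P i) (Q i))) =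
        PowerSeries.coeff (R := ℤ) j (f * g) := by
  intro j
  classical
  have key : ∀ i : ℕ,
      (1 - PowerSeries.X) ^ (p i + q i + 2) * ehrhartSeries (joinPolytope (P i) (Q i)) =
      ((1 - PowerSeries.X) ^ (p i + 1) * ehrhartSeries (P i)) *
      ((1 - PowerSeries.X) ^ (q i + 1) * ehrhartSeries (Q i)) := by
    intro i
    rw [Stmt2Aux.ehr_join (hP i).1 (hP i).2 (hQ i).1 (hQ i).2,
      show p i + q i + 2 = (p i + 1) + (q i + 1) by ring, pow_add]
    ring
  refine ⟨(Finset.range (j + 1)).sup (fun k => max (hf k).choose (hg k).choose),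
    fun i hi => ?_⟩
  rw [key i, PowerSeries.coeff_mul, PowerSeries.coeff_mul]
  apply Finset.sum_congr rfl
  intro sh hsh
  rw [Finset.HasAntidiagonal.mem_antidiagonal] at hsh
  have h1le : sh.1 ∈ Finset.range (j + 1) := Finset.mem_range.2 (by omega)
  have h2le : sh.2 ∈ Finset.range (j + 1) := Finset.mem_range.2 (by omega)
  have hN1 : (hf sh.1).choose ≤ i :=
    le_trans (le_trans (le_max_left _ _)
      (Finset.le_sup (f := fun k => max (hf k).choose (hg k).choose) h1le)) hi
  have hN2 : (hg sh.2).choose ≤ i :=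
    le_trans (le_trans (le_max_right _ _)
      (Finset.le_sup (f := fun k => max (hf k).choose (hg k).choose) h2le)) hi
  rw [(hf sh.1).choose_spec i hN1, (hg sh.2).choose_spec i hN2]
end

section
/- Let Q ⊆ ℝ^n be an n-dimensional lattice polytope containing the origin in its interior, let k ≥ 1 and d ≥ 1 be integers, and let R_d := Q ⊕ S_d ⊕ S_d ⊕ ⋯ ⊕ S_d (iterated free sum with k copies of S_d), an (n+kd)-dimensional lattice polytope in ℝ^{n+kd}. Then, as formal power series in ℤ[[X]], (1−X)^{n+kd+1}·Ehr_{R_d}(X) = ((1−X)^{n+1}·Ehr_Q(X)) · (1 + X + X² + ⋯ + X^d)^k. -/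
open scoped BigOperators Pointwise

/-- The free sum `P ⊕ Q ⊆ ℝ^{p+q}`. -/
noncomputable def freeSum {p q : ℕ} (P : Set (Fin p → ℝ)) (Q : Set (Fin q → ℝ)) :
    Set (Fin (p + q) → ℝ) :=
  convexHull ℝ
    ((fun x : Fin p → ℝ => Fin.append x (0 : Fin q → ℝ)) '' P ∪
     (fun y : Fin q → ℝ => Fin.append (0 : Fin p → ℝ) y) '' Q)

/-- The reflexive simplex `S_d = conv{e_1, …, e_d, -(e_1 + ⋯ + e_d)} ⊆ ℝ^d`. -/
noncomputable def Ssimplex (d : ℕ) : Set (Fin d → ℝ) :=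
  convexHull ℝ
    ((Set.range fun i : Fin d => fun j : Fin d => if j = i then (1 : ℝ) else 0) ∪
      {fun _ : Fin d => (-1 : ℝ)})

/-- Iterated free sum `Q ⊕ S_d ⊕ ⋯ ⊕ S_d` with `k` copies of `S_d`. -/
noncomputable def iterFreeSum {n : ℕ} (Q : Set (Fin n → ℝ)) (d : ℕ) :
    (k : ℕ) → Set (Fin (n + k * d) → ℝ)
  | 0 => cast (by rw [Nat.zero_mul, Nat.add_zero]) Q
  | k + 1 => cast (by rw [show n + k * d + d = n + (k + 1) * d from by ring])
      (freeSum (iterFreeSum Q d k) (Ssimplex d))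

/-! ### Auxiliary material -/

namespace StmtAux

open Set PowerSeries Finset

/-- Coercion of an integer vector to a real vector. -/
abbrev cz {p : ℕ} (x : Fin p → ℤ) : Fin p → ℝ := fun i => (x i : ℝ)

/-- Front part of a vector. -/
abbrev frontI {p d : ℕ} (z : Fin (p + d) → ℤ) : Fin p → ℤ := fun i => z (Fin.castAdd d i)

/-- Back part of a vector. -/
abbrev backI {p d : ℕ} (z : Fin (p + d) → ℤ) : Fin d → ℤ := fun i => z (Fin.natAdd p i)

lemma addCases_ext {p d : ℕ} {α : Type*} {f g : Fin (p + d) → α}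
    (h1 : ∀ i, f (Fin.castAdd d i) = g (Fin.castAdd d i))
    (h2 : ∀ i, f (Fin.natAdd p i) = g (Fin.natAdd p i)) : f = g :=
  funext fun j => Fin.addCases h1 h2 j

lemma append_frontI_backI {p d : ℕ} (z : Fin (p + d) → ℤ) :
    Fin.append (frontI z) (backI z) = z := by
  refine addCases_ext (fun i => ?_) (fun i => ?_)
  · rw [Fin.append_left]
  · rw [Fin.append_right]

lemma cz_append {p d : ℕ} (x : Fin p → ℤ) (y : Fin d → ℤ) :
    cz (Fin.append x y) = Fin.append (cz x) (cz y) := by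
  refine addCases_ext (fun i => ?_) (fun i => ?_) <;>
    simp [Fin.append_left, Fin.append_right]

lemma append_zero_zero {p d : ℕ} :
    Fin.append (0 : Fin p → ℝ) (0 : Fin d → ℝ) = 0 := by
  refine addCases_ext (fun i => ?_) (fun i => ?_) <;>
    simp [Fin.append_left, Fin.append_right]

/-- Lattice points in a bounded set form a finite set. -/
lemma lattice_finite {p : ℕ} {K : Set (Fin p → ℝ)} (hK : Bornology.IsBounded K) :
    {x : Fin p → ℤ | cz x ∈ K}.Finite := by
  obtain ⟨r, hr⟩ := hK.subset_closedBall 0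
  have : {x : Fin p → ℤ | cz x ∈ K} ⊆
      {x : Fin p → ℤ | ∀ i, x i ∈ Set.Icc (-⌈r⌉) ⌈r⌉} := by
    intro x hx
    have hx' : ‖cz x‖ ≤ r := by
      have := hr hx
      rwa [Metric.mem_closedBall, dist_zero_right] at this
    intro i
    have h1 : |(x i : ℝ)| ≤ r := by
      calc |(x i : ℝ)| = ‖(cz x) i‖ := rfl
        _ ≤ ‖cz x‖ := norm_le_pi_norm _ i
        _ ≤ r := hx'
    have h2 : (x i : ℝ) ≤ (⌈r⌉ : ℝ) := le_trans (le_trans (le_abs_self _) h1) (Int.le_ceil r)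
    have h3 : ((-⌈r⌉ : ℤ) : ℝ) ≤ (x i : ℝ) := by
      have hc := Int.le_ceil r
      have hn := neg_abs_le ((x i : ℝ))
      push_cast
      linarith
    constructor
    · exact_mod_cast h3
    · exact_mod_cast h2
  exact Set.Finite.subset (Set.Finite.pi' fun i => Set.finite_Icc _ _) this

/-- Monotonicity of dilates of convex sets containing the origin. -/
lemma smul_mono_mem {E : Type*} [AddCommGroup E] [Module ℝ E] {P : Set E}
    (hP : Convex ℝ P) (h0 : (0 : E) ∈ P) {a b : ℝ} (ha : 0 ≤ a) (hab : a ≤ b)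
    {u : E} (hu : u ∈ a • P) : u ∈ b • P := by
  obtain ⟨v, hv, rfl⟩ := hu
  rcases eq_or_lt_of_le (ha.trans hab) with hb0 | hb0
  · have ha0 : a = 0 := le_antisymm (hab.trans hb0.ge) ha
    exact ⟨v, hv, by show b • v = a • v; rw [ha0, ← hb0]⟩
  · refine ⟨(a / b) • v + (1 - a / b) • 0, hP hv h0 (by positivity) ?_ (by ring), ?_⟩
    · have : a / b ≤ 1 := (div_le_one hb0).2 hab
      linarith
    · show b • ((a / b) • v + (1 - a / b) • 0) = a • v
      rw [smul_add, smul_smul, smul_zero, smul_zero, add_zero,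
        mul_div_cancel₀ _ hb0.ne']

/-- Sigma card over a fintype. -/
lemma card_sigma' {B : Type*} [Fintype B] {F : B → Type*} [∀ b, Finite (F b)] :
    Nat.card (Σ b, F b) = ∑ b, Nat.card (F b) := by
  letI : ∀ b, Fintype (F b) := fun b => Fintype.ofFinite _
  simp only [Nat.card_eq_fintype_card]
  exact Fintype.card_sigma

/-! ### The simplex `S_d` -/

/-- The vertices of `S_d`. -/
noncomputable def vtx (d : ℕ) : Fin (d + 1) → (Fin d → ℝ) :=
  Fin.cons (fun _ => -1) (fun i j => if j = i then (1 : ℝ) else 0)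

lemma Ssimplex_eq (d : ℕ) : Ssimplex d = convexHull ℝ (Set.range (vtx d)) := by
  unfold Ssimplex vtx
  rw [Fin.range_cons, Set.union_singleton]

lemma Ssimplex_convex (d : ℕ) : Convex ℝ (Ssimplex d) := convex_convexHull ℝ _

lemma Ssimplex_nonempty (d : ℕ) : (Ssimplex d).Nonempty :=
  ⟨vtx d 0, by rw [Ssimplex_eq]; exact subset_convexHull ℝ _ (Set.mem_range_self 0)⟩

lemma Ssimplex_isBounded (d : ℕ) : Bornology.IsBounded (Ssimplex d) := by
  rw [Ssimplex_eq]
  exact ((Set.finite_range _).isCompact_convexHull (𝕜 := ℝ)).isBounded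

lemma sum_isLinear {d : ℕ} : IsLinearMap ℝ (fun x : Fin d → ℝ => ∑ i, x i) := by
  constructor
  · intro u v; exact Finset.sum_add_distrib
  · intro c u
    simp only [Pi.smul_apply, smul_eq_mul, ← Finset.mul_sum]

lemma func_isLinear {d : ℕ} (i : Fin d) :
    IsLinearMap ℝ (fun x : Fin d → ℝ => (∑ j, x j) - (d + 1) * x i) := by
  constructor
  · intro u v
    simp only [Pi.add_apply, Finset.sum_add_distrib]
    ring
  · intro c u
    simp only [Pi.smul_apply, smul_eq_mul, ← Finset.mul_sum]
    ring

/-- H-description of dilates of `S_d`. -/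
lemma mem_smul_Ssimplex {d : ℕ} (hd : 0 < d) {b : ℝ} (hb : 0 ≤ b) (x : Fin d → ℝ) :
    x ∈ b • Ssimplex d ↔
      (∑ i, x i) ≤ b ∧ ∀ i, (∑ j, x j) - (d + 1) * x i ≤ b := by
  rcases eq_or_lt_of_le hb with hb0 | hb0
  · -- b = 0
    subst hb0
    rw [Set.zero_smul_set (Ssimplex_nonempty d), Set.mem_zero]
    constructor
    · rintro rfl
      refine ⟨by simp, fun i => by simp⟩
    · rintro ⟨h1, h2⟩
      have hs : ∑ i, ((∑ j, x j) - ((d : ℝ) + 1) * x i) ≤ 0 :=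
        Finset.sum_nonpos fun i _ => h2 i
      rw [Finset.sum_sub_distrib, Finset.sum_const, Finset.card_univ,
        Fintype.card_fin, ← Finset.mul_sum] at hs
      have hσ0 : 0 ≤ ∑ j, x j := by
        rw [nsmul_eq_mul] at hs
        have hexp : (d : ℝ) * (∑ j, x j) - ((d : ℝ) + 1) * (∑ j, x j)
            = -(∑ j, x j) := by ring
        rw [hexp] at hs
        linarith
      have hσ : ∑ j, x j = 0 := le_antisymm h1 hσ0
      have hx : ∀ i ∈ Finset.univ, 0 ≤ x i := by
        intro i _
        have h2i := h2 i
        rw [hσ] at h2i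
        have hd1 : (0 : ℝ) < (d : ℝ) + 1 := by positivity
        nlinarith
      funext i
      have := (Finset.sum_eq_zero_iff_of_nonneg hx).1 hσ i (Finset.mem_univ i)
      simpa using this
  · -- 0 < b
    rw [Ssimplex_eq, ← convexHull_smul, Set.smul_set_range]
    constructor
    · intro hx
      have hA : convexHull ℝ (Set.range fun i => b • vtx d i) ⊆
          {x : Fin d → ℝ | ∑ i, x i ≤ b} := by
        apply convexHull_min _ (convex_halfSpace_le sum_isLinear b)
        rintro _ ⟨i, rfl⟩
        induction i using Fin.cases with
        | zero =>
          simp only [vtx, Fin.cons_zero, Set.mem_setOf_eq, Pi.smul_apply,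
            smul_eq_mul, mul_neg, mul_one, Finset.sum_const, Finset.card_univ,
            Fintype.card_fin, nsmul_eq_mul]
          nlinarith [Nat.cast_nonneg (α := ℝ) d]
        | succ i =>
          simp only [vtx, Fin.cons_succ, Set.mem_setOf_eq, Pi.smul_apply,
            smul_eq_mul, mul_ite, mul_one, mul_zero, Finset.sum_ite_eq',
            Finset.mem_univ, if_true, le_refl]
      have hB : ∀ i, convexHull ℝ (Set.range fun i => b • vtx d i) ⊆
          {x : Fin d → ℝ | (∑ j, x j) - ((d : ℝ) + 1) * x i ≤ b} := by
        intro i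
        apply convexHull_min _ (convex_halfSpace_le (func_isLinear i) b)
        rintro _ ⟨k, rfl⟩
        induction k using Fin.cases with
        | zero =>
          simp only [vtx, Fin.cons_zero, Set.mem_setOf_eq, Pi.smul_apply,
            smul_eq_mul, mul_neg, mul_one, Finset.sum_const, Finset.card_univ,
            Fintype.card_fin, nsmul_eq_mul]
          have : (d : ℝ) * -b - ((d : ℝ) + 1) * -b = b := by ring
          linarith [this.le]
        | succ k =>
          simp only [vtx, Fin.cons_succ, Set.mem_setOf_eq, Pi.smul_apply,
            smul_eq_mul, mul_ite, mul_one, mul_zero, Finset.sum_ite_eq',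
            Finset.mem_univ, if_true]
          by_cases hik : i = k
          · subst hik
            simp only [eq_self_iff_true, if_true]
            linarith [mul_nonneg (Nat.cast_nonneg (α := ℝ) d) hb, hb]
          · rw [if_neg hik]
            simp
      exact ⟨hA hx, fun i => hB i hx⟩
    · rintro ⟨h1, h2⟩
      set σ := ∑ j, x j with hσdef
      set μ := (b - σ) / (b * ((d : ℝ) + 1)) with hμdef
      have hbne : b ≠ 0 := hb0.ne'
      have hd1 : (0 : ℝ) < b * ((d : ℝ) + 1) := by positivity
      set w : Fin (d + 1) → ℝ := Fin.cons μ (fun i => x i / b + μ) with hwdef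
      have hμ0 : 0 ≤ μ := div_nonneg (by linarith) hd1.le
      have hw0 : ∀ i, 0 ≤ w i := by
        intro i
        induction i using Fin.cases with
        | zero => simpa [hwdef] using hμ0
        | succ i =>
          have key : 0 ≤ ((d : ℝ) + 1) * x i + (b - σ) := by
            have := h2 i; linarith
          have heq : w i.succ = (((d : ℝ) + 1) * x i + (b - σ)) / (b * ((d : ℝ) + 1)) := by
            simp only [hwdef, Fin.cons_succ, hμdef]
            field_simp
          rw [heq]
          exact div_nonneg key hd1.le
      have hw1 : ∑ i, w i = 1 := by
        rw [hwdef, Fin.sum_cons, Finset.sum_add_distrib, Finset.sum_const,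
          Finset.card_univ, Fintype.card_fin, ← Finset.sum_div, ← hσdef,
          nsmul_eq_mul, hμdef]
        field_simp
        ring
      have hmem := Finset.centerMass_mem_convexHull Finset.univ
        (w := w) (z := fun i => b • vtx d i) (fun i _ => hw0 i)
        (by rw [hw1]; exact one_pos) (fun i _ => Set.mem_range_self i)
      have hcm : Finset.univ.centerMass w (fun i => b • vtx d i) = x := by
        rw [Finset.centerMass_eq_of_sum_1 _ _ hw1]
        funext j
        rw [Finset.sum_apply, Fin.sum_univ_succ]
        have hv0 : (w 0 • (b • vtx d 0)) j = μ * (b * (-1)) := by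
          simp [hwdef, vtx, Pi.smul_apply, smul_eq_mul]
        have hvs : ∀ i : Fin d, (w i.succ • (b • vtx d i.succ)) j
            = if j = i then (x i / b + μ) * b else 0 := by
          intro i
          simp only [hwdef, vtx, Fin.cons_succ, Pi.smul_apply, smul_eq_mul]
          split_ifs with h <;> simp [h] <;> ring
        rw [hv0, Finset.sum_congr rfl fun i _ => hvs i, Finset.sum_ite_eq,
          if_pos (Finset.mem_univ j)]
        show μ * (b * (-1)) + (x j / b + μ) * b = x j
        field_simp
        ring
      rw [← hcm]
      exact hmem

lemma zero_mem_Ssimplex {d : ℕ} (hd : 0 < d) : (0 : Fin d → ℝ) ∈ Ssimplex d := by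
  have := (mem_smul_Ssimplex hd (le_refl (0:ℝ) |>.trans zero_le_one) (0 : Fin d → ℝ)).2
  simpa using this ⟨by simp, fun i => by simp⟩

/-! ### The level function -/

/-- Level of an integer point w.r.t. `S_d`. -/
def lev (d : ℕ) (y : Fin d → ℤ) : ℕ :=
  max (∑ i, y i).toNat (Finset.univ.sup fun i : Fin d => ((∑ j, y j) - (d + 1) * y i).toNat)

lemma toNat_cast_le {a : ℤ} {b : ℝ} (hb : 0 ≤ b) :
    ((a.toNat : ℝ)) ≤ b ↔ (a : ℝ) ≤ b := by
  rcases le_or_gt 0 a with ha | ha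
  · rw [show ((a.toNat : ℝ)) = ((a.toNat : ℤ) : ℝ) by push_cast; ring,
      Int.toNat_of_nonneg ha]
  · have h1 : ((a.toNat : ℝ)) = 0 := by
      rw [Int.toNat_of_nonpos ha.le]; simp
    rw [h1]
    constructor
    · intro _; exact le_trans (by exact_mod_cast ha.le) hb
    · intro _; exact hb

lemma sup_cast_le {d : ℕ} (hd : 0 < d) (f : Fin d → ℕ) {b : ℝ} :
    ((Finset.univ.sup f : ℕ) : ℝ) ≤ b ↔ ∀ i, (f i : ℝ) ≤ b := by
  constructor
  · intro H i
    exact le_trans (by exact_mod_cast Finset.le_sup (Finset.mem_univ i)) H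
  · intro H
    obtain ⟨i₀, -, h⟩ := Finset.exists_mem_eq_sup Finset.univ
      ⟨⟨0, hd⟩, Finset.mem_univ _⟩ f
    rw [h]; exact H i₀

/-- Characterization of dilate membership via the level. -/
lemma mem_smul_Ssimplex_int {d : ℕ} (hd : 0 < d) {b : ℝ} (hb : 0 ≤ b) (y : Fin d → ℤ) :
    cz y ∈ b • Ssimplex d ↔ (lev d y : ℝ) ≤ b := by
  rw [mem_smul_Ssimplex hd hb]
  unfold lev
  rw [Nat.cast_max, max_le_iff, toNat_cast_le hb, sup_cast_le hd]
  constructor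
  · rintro ⟨h1, h2⟩
    refine ⟨by push_cast at h1 ⊢; convert h1 using 2, fun i => ?_⟩
    rw [toNat_cast_le hb]
    have := h2 i
    push_cast at this ⊢
    convert this using 2
  · rintro ⟨h1, h2⟩
    constructor
    · push_cast at h1 ⊢; convert h1 using 2
    · intro i
      have := h2 i
      rw [toNat_cast_le hb] at this
      push_cast at this ⊢
      convert this using 2

/-! ### Counting: compositions -/

/-- `c`-shift of an integer vector. -/
def cOf {d : ℕ} (y : Fin d → ℤ) : ℕ := Finset.univ.sup fun i => (-(y i)).toNat

def wOf {d : ℕ} (y : Fin d → ℤ) : Fin (d + 1) → ℕ :=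
  Fin.cons (cOf y) fun i => (y i + cOf y).toNat

def yOf {d : ℕ} (w : Fin (d + 1) → ℕ) : Fin d → ℤ := fun i => (w i.succ : ℤ) - (w 0 : ℤ)

lemma cOf_spec {d : ℕ} (y : Fin d → ℤ) (i : Fin d) : -(y i) ≤ (cOf y : ℤ) := by
  calc -(y i) ≤ ((-(y i)).toNat : ℤ) := Int.self_le_toNat _
    _ ≤ (cOf y : ℤ) := by
        exact_mod_cast Finset.le_sup (f := fun i => (-(y i)).toNat) (Finset.mem_univ i)

lemma cOf_add_nonneg {d : ℕ} (y : Fin d → ℤ) (i : Fin d) : 0 ≤ y i + cOf y := by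
  have := cOf_spec y i; linarith

lemma sum_wOf {d : ℕ} (y : Fin d → ℤ) :
    ((∑ j, wOf y j : ℕ) : ℤ) = (∑ i, y i) + (d + 1) * cOf y := by
  rw [wOf, Fin.sum_cons]
  push_cast
  rw [Finset.sum_congr rfl fun i _ => Int.toNat_of_nonneg (cOf_add_nonneg y i)]
  rw [Finset.sum_add_distrib, Finset.sum_const, Finset.card_univ, Fintype.card_fin]
  push_cast; ring

lemma lev_eq_sum_wOf {d : ℕ} (hd : 0 < d) (y : Fin d → ℤ) :
    lev d y = ∑ j, wOf y j := by
  unfold lev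
  have hW := sum_wOf y
  set W := ∑ j, wOf y j with hWdef
  have hc0 : (0 : ℤ) ≤ (cOf y : ℤ) := Int.natCast_nonneg _
  have hdc : (0 : ℤ) ≤ ((d : ℤ) + 1) * (cOf y : ℤ) := by positivity
  apply le_antisymm
  · apply max_le
    · rw [Int.toNat_le, hW]
      linarith
    · apply Finset.sup_le
      intro i _
      rw [Int.toNat_le, hW]
      have hsp := cOf_spec y i
      have : ((d : ℤ) + 1) * (-(y i)) ≤ ((d : ℤ) + 1) * (cOf y : ℤ) :=
        mul_le_mul_of_nonneg_left hsp (by positivity)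
      linarith
  · by_cases hc : cOf y = 0
    · have hynn : ∀ i, 0 ≤ y i := by
        intro i
        have := cOf_spec y i
        rw [hc] at this
        push_cast at this
        linarith
      have hσnn : 0 ≤ ∑ i, y i := Finset.sum_nonneg fun i _ => hynn i
      have hWσ : (W : ℤ) = ∑ i, y i := by rw [hW, hc]; push_cast; ring
      have hWτ : W = (∑ i, y i).toNat := by omega
      rw [hWτ]
      exact le_max_left _ _
    · obtain ⟨i₀, -, hi₀⟩ := Finset.exists_mem_eq_sup Finset.univ
        ⟨⟨0, hd⟩, Finset.mem_univ _⟩ (fun i => (-(y i)).toNat)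
      have hc0' : cOf y = (-(y i₀)).toNat := hi₀
      have hpos : 0 < (-(y i₀)).toNat := by
        rw [← hc0']; exact Nat.pos_of_ne_zero hc
      have hy0 : (cOf y : ℤ) = -(y i₀) := by rw [hc0']; omega
      have hterm : (∑ i, y i) - ((d : ℤ) + 1) * y i₀ = (W : ℤ) := by
        rw [hW, hy0]; ring
      have hle : W ≤ ((∑ i, y i) - ((d : ℤ) + 1) * y i₀).toNat := by omega
      refine le_trans hle (le_trans ?_ (le_max_right _ _))
      exact Finset.le_sup (f := fun i => ((∑ j, y j) - ((d : ℤ) + 1) * y i).toNat)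
        (Finset.mem_univ i₀)

lemma yOf_wOf {d : ℕ} (y : Fin d → ℤ) : yOf (wOf y) = y := by
  funext i
  simp only [yOf, wOf, Fin.cons_succ, Fin.cons_zero]
  rw [Int.toNat_of_nonneg (cOf_add_nonneg y i)]
  ring

lemma wOf_yOf {d : ℕ} {w : Fin (d + 1) → ℕ} (h0 : ∃ j, w j = 0) : wOf (yOf w) = w := by
  have hc : cOf (yOf w) = w 0 := by
    apply le_antisymm
    · apply Finset.sup_le
      intro i _
      simp only [yOf]
      omega
    · obtain ⟨j, hj⟩ := h0
      induction j using Fin.cases with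
      | zero => rw [hj]; exact Nat.zero_le _
      | succ i =>
        refine le_trans ?_ (Finset.le_sup (Finset.mem_univ i))
        simp only [yOf, hj]
        omega
  funext j
  induction j using Fin.cases with
  | zero => simp [wOf, hc]
  | succ i =>
    simp only [wOf, Fin.cons_succ, hc, yOf]
    omega

lemma exists_zero_wOf {d : ℕ} (hd : 0 < d) (y : Fin d → ℤ) : ∃ j, wOf y j = 0 := by
  by_cases hc : cOf y = 0
  · exact ⟨0, by simp [wOf, hc]⟩
  · obtain ⟨i₀, -, hi₀⟩ := Finset.exists_mem_eq_sup Finset.univ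
      ⟨⟨0, hd⟩, Finset.mem_univ _⟩ (fun i => (-(y i)).toNat)
    have hc0' : cOf y = (-(y i₀)).toNat := hi₀
    refine ⟨i₀.succ, ?_⟩
    simp only [wOf, Fin.cons_succ]
    omega

/-- The main bijection for levels. -/
noncomputable def levEquiv {d : ℕ} (hd : 0 < d) (m : ℕ) :
    {w : Fin (d + 1) → ℕ // (∑ i, w i = m) ∧ ∃ j, w j = 0} ≃
      {y : Fin d → ℤ // lev d y = m} where
  toFun w := ⟨yOf w.1, by
    have h1 := wOf_yOf w.2.2
    rw [lev_eq_sum_wOf hd, h1]; exact w.2.1⟩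
  invFun y := ⟨wOf y.1, by
    refine ⟨?_, exists_zero_wOf hd y.1⟩
    rw [← lev_eq_sum_wOf hd, y.2]⟩
  left_inv w := Subtype.ext (wOf_yOf w.2.2)
  right_inv y := Subtype.ext (yOf_wOf y.1)

/-- Number of compositions. -/
noncomputable def compCard (j m : ℕ) : ℕ := Nat.card {w : Fin j → ℕ // ∑ i, w i = m}

lemma comp_finite (j m : ℕ) : Finite {w : Fin j → ℕ // ∑ i, w i = m} := by
  have : {w : Fin j → ℕ | ∑ i, w i = m}.Finite := by
    refine Set.Finite.subset (Set.Finite.pi' fun i => Set.finite_Icc 0 m) ?_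
    intro w hw i
    simp only [Set.mem_Icc]
    exact ⟨Nat.zero_le _, hw ▸ Finset.single_le_sum (fun _ _ => Nat.zero_le _)
      (Finset.mem_univ i)⟩
  exact this.to_subtype

lemma lev_fiber_finite {d : ℕ} (hd : 0 < d) (m : ℕ) :
    Finite {y : Fin d → ℤ // lev d y = m} := by
  haveI := comp_finite (d + 1) m
  haveI : Finite {w : Fin (d + 1) → ℕ // (∑ i, w i = m) ∧ ∃ j, w j = 0} := by
    refine Finite.of_injective
      (fun w => (⟨w.1, w.2.1⟩ : {w : Fin (d + 1) → ℕ // ∑ i, w i = m})) ?_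
    intro a b hab
    cases a; cases b
    simpa [Subtype.mk.injEq] using hab
  exact Finite.of_equiv _ (levEquiv hd m)

/-! ### Power series -/

/-- Geometric series. -/
noncomputable def G : PowerSeries ℤ := PowerSeries.mk fun _ => 1

noncomputable def Aser (j : ℕ) : PowerSeries ℤ := PowerSeries.mk fun m => (compCard j m : ℤ)

noncomputable def Δser (d : ℕ) : PowerSeries ℤ :=
  PowerSeries.mk fun m => (Nat.card {y : Fin d → ℤ // lev d y = m} : ℤ)

lemma one_sub_X_mul_G : (1 - PowerSeries.X) * G = 1 := by
  ext m
  rw [sub_mul, one_mul, map_sub]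
  cases m with
  | zero => simp [G, PowerSeries.coeff_zero_eq_constantCoeff]
  | succ m => simp [G, PowerSeries.coeff_succ_X_mul, PowerSeries.coeff_one]

lemma Aser_zero : Aser 0 = 1 := by
  ext m
  rw [Aser, PowerSeries.coeff_mk, PowerSeries.coeff_one]
  cases m with
  | zero =>
    simp only [if_pos rfl]
    norm_cast
    haveI : Unique {w : Fin 0 → ℕ // ∑ i, w i = 0} :=
      ⟨⟨⟨fun i => i.elim0, by simp⟩⟩, fun w => Subtype.ext (funext fun i => i.elim0)⟩
    exact_mod_cast Nat.card_unique
  | succ m =>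
    simp only [Nat.succ_ne_zero, if_false]
    norm_cast
    haveI : IsEmpty {w : Fin 0 → ℕ // ∑ i, w i = m + 1} := by
      refine ⟨fun w => ?_⟩
      have := w.2
      simp at this
    exact_mod_cast Nat.card_of_isEmpty

lemma finite_and_left {α : Type*} {p q : α → Prop} (h : Finite {a // p a}) :
    Finite {a // p a ∧ q a} := by
  refine Finite.of_injective (fun x => (⟨x.1, x.2.1⟩ : {a // p a})) ?_
  intro a b hab
  cases a; cases b
  simpa [Subtype.mk.injEq] using hab

lemma comp_succ (j m : ℕ) :
    compCard (j + 1) m = ∑ k ∈ Finset.range (m + 1), compCard j (m - k) := by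
  classical
  haveI := comp_finite (j + 1) m
  haveI : ∀ k, Finite {w : Fin j → ℕ // ∑ i, w i = k} := fun k => comp_finite j k
  set f : {w : Fin (j + 1) → ℕ // ∑ i, w i = m} → Fin (m + 1) := fun w =>
    ⟨w.1 0, by
      have hs := w.2
      rw [Fin.sum_univ_succ] at hs
      omega⟩ with hfdef
  have hE : ∀ b : Fin (m + 1),
      {x : {w : Fin (j + 1) → ℕ // ∑ i, w i = m} // f x = b} ≃
        {w' : Fin j → ℕ // ∑ i, w' i = m - (b : ℕ)} := by
    intro b
    refine ⟨fun x => ⟨Fin.tail x.1.1, ?_⟩, fun w' => ⟨⟨Fin.cons (b : ℕ) w'.1, ?_⟩, ?_⟩, ?_, ?_⟩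
    · have hs := x.1.2
      rw [Fin.sum_univ_succ] at hs
      have h0 : x.1.1 0 = (b : ℕ) := congrArg Fin.val x.2
      show ∑ i : Fin j, x.1.1 i.succ = m - (b : ℕ)
      omega
    · rw [Fin.sum_univ_succ]
      have hb := b.isLt
      have hs := w'.2
      simp only [Fin.cons_zero, Fin.cons_succ]
      omega
    · apply Fin.ext
      show (Fin.cons (b : ℕ) w'.1 : Fin (j+1) → ℕ) 0 = (b : ℕ)
      simp
    · intro x
      apply Subtype.ext
      apply Subtype.ext
      show Fin.cons ((b : ℕ)) (Fin.tail x.1.1) = x.1.1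
      have h0 : x.1.1 0 = (b : ℕ) := congrArg Fin.val x.2
      rw [← h0, Fin.cons_self_tail]
    · intro w'
      apply Subtype.ext
      funext i
      show (Fin.cons ((b : ℕ)) w'.1 : Fin (j + 1) → ℕ) i.succ = w'.1 i
      rw [Fin.cons_succ]
  have h1 : compCard (j + 1) m = ∑ b : Fin (m + 1),
      Nat.card {x : {w : Fin (j + 1) → ℕ // ∑ i, w i = m} // f x = b} := by
    rw [compCard, Nat.card_congr (Equiv.sigmaFiberEquiv f).symm, card_sigma']
  rw [h1]
  rw [Finset.sum_congr rfl fun b _ => Nat.card_congr (hE b)]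
  rw [← Fin.sum_univ_eq_sum_range (fun k => compCard j (m - k)) (m + 1)]
  rfl

lemma Aser_succ (j : ℕ) : Aser (j + 1) = Aser j * G := by
  ext m
  rw [Aser, PowerSeries.coeff_mk, PowerSeries.coeff_mul]
  rw [Finset.sum_congr rfl fun p (_ : p ∈ Finset.HasAntidiagonal.antidiagonal m) => by
    rw [Aser, G, PowerSeries.coeff_mk, PowerSeries.coeff_mk, mul_one]]
  rw [Finset.Nat.sum_antidiagonal_eq_sum_range_succ_mk]
  rw [comp_succ j m]
  push_cast
  have := Finset.sum_range_reflect (fun k => (compCard j k : ℤ)) (m + 1)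
  simpa using this

lemma Aser_eq_G_pow (j : ℕ) : Aser j = G ^ j := by
  induction j with
  | zero => rw [Aser_zero, pow_zero]
  | succ j ih => rw [Aser_succ, ih, pow_succ]

lemma card_partition {d : ℕ} (hd : 0 < d) (m : ℕ) :
    compCard (d + 1) m = Nat.card {y : Fin d → ℤ // lev d y = m} +
      Nat.card {w : Fin (d + 1) → ℕ // (∑ i, w i = m) ∧ ∀ j, w j ≠ 0} := by
  classical
  haveI hfin := comp_finite (d + 1) m
  haveI h1 : Finite {w : Fin (d + 1) → ℕ // (∑ i, w i = m) ∧ ∃ j, w j = 0} :=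
    finite_and_left hfin
  haveI h2 : Finite {w : Fin (d + 1) → ℕ // (∑ i, w i = m) ∧ ∀ j, w j ≠ 0} :=
    finite_and_left hfin
  haveI h3 := lev_fiber_finite hd m
  have e0 : {w : Fin (d + 1) → ℕ // ∑ i, w i = m} ≃
      {x : {w : Fin (d + 1) → ℕ // ∑ i, w i = m} // ∃ j, x.1 j = 0} ⊕
      {x : {w : Fin (d + 1) → ℕ // ∑ i, w i = m} // ¬ ∃ j, x.1 j = 0} :=
    (Equiv.sumCompl _).symm
  have eL : {x : {w : Fin (d + 1) → ℕ // ∑ i, w i = m} // ∃ j, x.1 j = 0} ≃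
      {y : Fin d → ℤ // lev d y = m} :=
    (Equiv.subtypeSubtypeEquivSubtypeInter
      (fun w : Fin (d + 1) → ℕ => ∑ i, w i = m) (fun w => ∃ j, w j = 0)).trans
      (levEquiv hd m)
  have eR : {x : {w : Fin (d + 1) → ℕ // ∑ i, w i = m} // ¬ ∃ j, x.1 j = 0} ≃
      {w : Fin (d + 1) → ℕ // (∑ i, w i = m) ∧ ∀ j, w j ≠ 0} :=
    (Equiv.subtypeSubtypeEquivSubtypeInter
      (fun w : Fin (d + 1) → ℕ => ∑ i, w i = m) (fun w => ¬ ∃ j, w j = 0)).trans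
      (Equiv.subtypeEquivRight fun w => by
        constructor
        · rintro ⟨hs, hne⟩
          exact ⟨hs, fun j hj => hne ⟨j, hj⟩⟩
        · rintro ⟨hs, hne⟩
          exact ⟨hs, fun h => h.elim fun j hj => hne j hj⟩)
  haveI : Finite ({x : {w : Fin (d + 1) → ℕ // ∑ i, w i = m} // ∃ j, x.1 j = 0}) :=
    Finite.of_equiv _ eL.symm
  haveI : Finite ({x : {w : Fin (d + 1) → ℕ // ∑ i, w i = m} // ¬ ∃ j, x.1 j = 0}) :=
    Finite.of_equiv _ eR.symm
  rw [compCard, Nat.card_congr e0, Nat.card_sum, Nat.card_congr eL, Nat.card_congr eR]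

lemma pos_card {d m : ℕ} :
    Nat.card {w : Fin (d + 1) → ℕ // (∑ i, w i = m) ∧ ∀ j, w j ≠ 0} =
      if d + 1 ≤ m then compCard (d + 1) (m - (d + 1)) else 0 := by
  split_ifs with h
  · rw [compCard]
    apply Nat.card_congr
    refine ⟨fun w => ⟨fun j => w.1 j - 1, ?_⟩, fun w' => ⟨fun j => w'.1 j + 1, ?_, ?_⟩, ?_, ?_⟩
    · obtain ⟨hs, hp⟩ := w.2
      have h1 : ∀ j, 1 ≤ w.1 j := fun j => Nat.one_le_iff_ne_zero.2 (hp j)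
      show ∑ j, (w.1 j - 1) = m - (d + 1)
      have hsum : ∑ j, (w.1 j - 1 + 1) = ∑ j, w.1 j :=
        Finset.sum_congr rfl fun j _ => by have := h1 j; omega
      rw [Finset.sum_add_distrib, Finset.sum_const, Finset.card_univ,
        Fintype.card_fin, hs] at hsum
      simp only [smul_eq_mul, mul_one] at hsum
      omega
    · show ∑ j, (w'.1 j + 1) = m
      have hs := w'.2
      rw [Finset.sum_add_distrib, Finset.sum_const, Finset.card_univ,
        Fintype.card_fin, hs]
      simp only [smul_eq_mul, mul_one]
      omega
    · intro j
      show w'.1 j + 1 ≠ 0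
      exact Nat.succ_ne_zero _
    · intro w
      apply Subtype.ext
      funext j
      have h1 : 1 ≤ w.1 j := Nat.one_le_iff_ne_zero.2 (w.2.2 j)
      show w.1 j - 1 + 1 = w.1 j
      omega
    · intro w'
      apply Subtype.ext
      funext j
      show w'.1 j + 1 - 1 = w'.1 j
      omega
  · haveI : IsEmpty {w : Fin (d + 1) → ℕ // (∑ i, w i = m) ∧ ∀ j, w j ≠ 0} := by
      refine ⟨fun w => ?_⟩
      obtain ⟨hs, hp⟩ := w.2
      have h1 : ∀ j ∈ Finset.univ, 1 ≤ w.1 j := fun j _ => Nat.one_le_iff_ne_zero.2 (hp j)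
      have h2 : ∑ j : Fin (d + 1), 1 ≤ ∑ j, w.1 j := Finset.sum_le_sum h1
      rw [Finset.sum_const, Finset.card_univ, Fintype.card_fin, hs] at h2
      simp only [smul_eq_mul, mul_one] at h2
      omega
    exact Nat.card_of_isEmpty

lemma Δser_eq {d : ℕ} (hd : 0 < d) :
    Δser d = Aser (d + 1) - PowerSeries.X ^ (d + 1) * Aser (d + 1) := by
  ext m
  rw [map_sub, Δser, PowerSeries.coeff_mk, Aser, PowerSeries.coeff_mk,
    PowerSeries.coeff_X_pow_mul', PowerSeries.coeff_mk]
  have h1 := card_partition hd m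
  have h2 := pos_card (d := d) (m := m)
  split_ifs at h2 ⊢ with h
  · rw [h2] at h1
    have h3 := congrArg (fun x : ℕ => (x : ℤ)) h1
    push_cast at h3
    linarith
  · rw [h2, Nat.add_zero] at h1
    rw [h1]
    ring

lemma delta_identity {d : ℕ} (hd : 0 < d) :
    (1 - PowerSeries.X) ^ d * Δser d =
      ∑ i ∈ Finset.range (d + 1), (PowerSeries.X : PowerSeries ℤ) ^ i := by
  rw [Δser_eq hd, Aser_eq_G_pow]
  have h1 : (1 - PowerSeries.X : PowerSeries ℤ) ^ d * G ^ (d + 1) = G := by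
    rw [pow_succ, ← mul_assoc, ← mul_pow, one_sub_X_mul_G, one_pow, one_mul]
  have h3 : (∑ i ∈ Finset.range (d + 1), (PowerSeries.X : PowerSeries ℤ) ^ i) *
      (1 - PowerSeries.X) = 1 - PowerSeries.X ^ (d + 1) := by
    have := geom_sum_mul (PowerSeries.X : PowerSeries ℤ) (d + 1)
    linear_combination -this
  calc (1 - PowerSeries.X) ^ d *
      (G ^ (d + 1) - PowerSeries.X ^ (d + 1) * G ^ (d + 1)) =
      (1 - PowerSeries.X ^ (d + 1)) * ((1 - PowerSeries.X) ^ d * G ^ (d + 1)) := by ring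
    _ = (1 - PowerSeries.X ^ (d + 1)) * G := by rw [h1]
    _ = (∑ i ∈ Finset.range (d + 1), (PowerSeries.X : PowerSeries ℤ) ^ i) *
        ((1 - PowerSeries.X) * G) := by rw [← h3]; ring
    _ = _ := by rw [one_sub_X_mul_G, mul_one]

/-! ### Free sums -/

lemma freeSum_convex {p q : ℕ} (P : Set (Fin p → ℝ)) (Q : Set (Fin q → ℝ)) :
    Convex ℝ (freeSum P Q) := convex_convexHull ℝ _

lemma inl_isLinear {p d : ℕ} :
    IsLinearMap ℝ (fun x : Fin p → ℝ => Fin.append x (0 : Fin d → ℝ)) := by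
  constructor
  · intro x x'
    refine addCases_ext (fun i => ?_) (fun i => ?_) <;>
      simp [Fin.append_left, Fin.append_right]
  · intro c x
    refine addCases_ext (fun i => ?_) (fun i => ?_) <;>
      simp [Fin.append_left, Fin.append_right]

lemma inr_isLinear {p d : ℕ} :
    IsLinearMap ℝ (fun y : Fin d → ℝ => Fin.append (0 : Fin p → ℝ) y) := by
  constructor
  · intro x x'
    refine addCases_ext (fun i => ?_) (fun i => ?_) <;>
      simp [Fin.append_left, Fin.append_right]
  · intro c x
    refine addCases_ext (fun i => ?_) (fun i => ?_) <;>
      simp [Fin.append_left, Fin.append_right]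

lemma image_isBounded {p q : ℕ} {f : (Fin p → ℝ) → (Fin q → ℝ)}
    (hf : ∀ x j, ‖f x j‖ ≤ ‖x‖) {P : Set (Fin p → ℝ)}
    (hP : Bornology.IsBounded P) : Bornology.IsBounded (f '' P) := by
  obtain ⟨r, hr⟩ := hP.subset_closedBall 0
  refine (Metric.isBounded_closedBall (x := (0 : Fin q → ℝ)) (r := max r 0)).subset ?_
  rintro _ ⟨x, hx, rfl⟩
  rw [Metric.mem_closedBall, dist_zero_right]
  have hx' : ‖x‖ ≤ r := by
    have := hr hx; rwa [Metric.mem_closedBall, dist_zero_right] at this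
  rw [pi_norm_le_iff_of_nonneg (le_max_right r 0)]
  intro j
  exact le_trans (hf x j) (le_trans hx' (le_max_left r 0))

lemma freeSum_isBounded {p q : ℕ} {P : Set (Fin p → ℝ)} {Q : Set (Fin q → ℝ)}
    (hP : Bornology.IsBounded P) (hQ : Bornology.IsBounded Q) :
    Bornology.IsBounded (freeSum P Q) := by
  rw [freeSum, isBounded_convexHull]
  refine Bornology.IsBounded.union ?_ ?_
  · refine image_isBounded (fun x j => ?_) hP
    refine Fin.addCases (fun i => ?_) (fun i => ?_) j
    · rw [Fin.append_left]; exact norm_le_pi_norm x i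
    · rw [Fin.append_right]; simp [norm_nonneg]
  · refine image_isBounded (fun x j => ?_) hQ
    refine Fin.addCases (fun i => ?_) (fun i => ?_) j
    · rw [Fin.append_left]; simp [norm_nonneg]
    · rw [Fin.append_right]; exact norm_le_pi_norm x i

lemma freeSum_zero_mem {p q : ℕ} {P : Set (Fin p → ℝ)} {Q : Set (Fin q → ℝ)}
    (hP : (0 : Fin p → ℝ) ∈ P) : (0 : Fin (p + q) → ℝ) ∈ freeSum P Q := by
  refine subset_convexHull ℝ _ (Set.mem_union_left _ ⟨0, hP, append_zero_zero⟩)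

/-- Membership in dilates of a free sum. -/
lemma mem_smul_freeSum {p d : ℕ} {P : Set (Fin p → ℝ)} {S : Set (Fin d → ℝ)}
    (hPc : Convex ℝ P) (hSc : Convex ℝ S) (hP0 : (0 : Fin p → ℝ) ∈ P)
    (hS0 : (0 : Fin d → ℝ) ∈ S) {r : ℝ} (hr : 0 ≤ r) (u : Fin p → ℝ) (v : Fin d → ℝ) :
    Fin.append u v ∈ r • freeSum P S ↔
      ∃ a b : ℝ, 0 ≤ a ∧ 0 ≤ b ∧ a + b = r ∧ u ∈ a • P ∧ v ∈ b • S := by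
  have hPne : P.Nonempty := ⟨0, hP0⟩
  have hSne : S.Nonempty := ⟨0, hS0⟩
  have himg1 : ∀ A : Set (Fin p → ℝ),
      r • ((fun x : Fin p → ℝ => Fin.append x (0 : Fin d → ℝ)) '' A) =
        (fun x : Fin p → ℝ => Fin.append x (0 : Fin d → ℝ)) '' (r • A) := by
    intro A
    rw [← Set.image_smul, ← Set.image_comp, ← Set.image_smul, ← Set.image_comp]
    apply Set.image_congr'
    intro x
    exact (inl_isLinear.map_smul r x).symm
  have himg2 : ∀ A : Set (Fin d → ℝ),
      r • ((fun y : Fin d → ℝ => Fin.append (0 : Fin p → ℝ) y) '' A) =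
        (fun y : Fin d → ℝ => Fin.append (0 : Fin p → ℝ) y) '' (r • A) := by
    intro A
    rw [← Set.image_smul, ← Set.image_comp, ← Set.image_smul, ← Set.image_comp]
    apply Set.image_congr'
    intro y
    exact (inr_isLinear.map_smul r y).symm
  have hkey : r • freeSum P S =
      convexJoin ℝ ((fun x : Fin p → ℝ => Fin.append x (0 : Fin d → ℝ)) '' (r • P))
        ((fun y : Fin d → ℝ => Fin.append (0 : Fin p → ℝ) y) '' (r • S)) := by
    rw [freeSum, ← convexHull_smul, Set.smul_set_union, himg1, himg2,
      convexHull_union (hPne.smul_set.image _) (hSne.smul_set.image _),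
      ((hPc.smul r).is_linear_image inl_isLinear).convexHull_eq,
      ((hSc.smul r).is_linear_image inr_isLinear).convexHull_eq]
  rw [hkey, mem_convexJoin]
  constructor
  · rintro ⟨_, ⟨p₀, hp₀, rfl⟩, _, ⟨s₀, hs₀, rfl⟩, θ, μ, hθ, hμ, hθμ, hzeq⟩
    have hu : u = θ • p₀ := by
      funext i
      have h := congrFun hzeq (Fin.castAdd d i)
      simp only [Pi.add_apply, Pi.smul_apply, smul_eq_mul] at h
      rw [Fin.append_left, Fin.append_left, Fin.append_left] at h
      simp only [Pi.zero_apply, mul_zero, add_zero] at h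
      simpa [Pi.smul_apply] using h.symm
    have hv : v = μ • s₀ := by
      funext i
      have h := congrFun hzeq (Fin.natAdd p i)
      simp only [Pi.add_apply, Pi.smul_apply, smul_eq_mul] at h
      rw [Fin.append_right, Fin.append_right, Fin.append_right] at h
      simp only [Pi.zero_apply, mul_zero, zero_add] at h
      simpa [Pi.smul_apply] using h.symm
    obtain ⟨p₁, hp₁, rfl⟩ := hp₀
    obtain ⟨s₁, hs₁, rfl⟩ := hs₀
    refine ⟨θ * r, μ * r, mul_nonneg hθ hr, mul_nonneg hμ hr, by
      rw [← add_mul, hθμ, one_mul], ?_, ?_⟩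
    · rw [hu]
      exact ⟨p₁, hp₁, by rw [smul_smul]⟩
    · rw [hv]
      exact ⟨s₁, hs₁, by rw [smul_smul]⟩
  · rintro ⟨a, b, ha, hb, hab, hu, hv⟩
    rcases eq_or_lt_of_le hr with hr0 | hr0
    · -- r = 0
      have ha0 : a = 0 := by linarith
      have hb0 : b = 0 := by linarith
      subst ha0; subst hb0
      rw [Set.zero_smul_set hPne, Set.mem_zero] at hu
      rw [Set.zero_smul_set hSne, Set.mem_zero] at hv
      subst hu; subst hv
      refine ⟨Fin.append 0 0, ⟨0, ?_, rfl⟩, Fin.append 0 0, ⟨0, ?_, rfl⟩,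
        1, 0, zero_le_one, le_refl 0, add_zero 1, by simp⟩
      · rw [← hr0, Set.zero_smul_set hPne]; exact Set.mem_zero.2 rfl
      · rw [← hr0, Set.zero_smul_set hSne]; exact Set.mem_zero.2 rfl
    · -- 0 < r
      obtain ⟨p₁, hp₁, rfl⟩ := hu
      obtain ⟨s₁, hs₁, rfl⟩ := hv
      refine ⟨Fin.append (r • p₁) 0, ⟨r • p₁, smul_mem_smul_set hp₁, rfl⟩,
        Fin.append 0 (r • s₁), ⟨r • s₁, smul_mem_smul_set hs₁, rfl⟩,
        a / r, b / r, div_nonneg ha hr0.le, div_nonneg hb hr0.le, ?_, ?_⟩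
      · rw [← add_div, hab, div_self hr0.ne']
      · refine addCases_ext (fun i => ?_) (fun i => ?_)
        · simp only [Pi.add_apply, Pi.smul_apply, smul_eq_mul]
          rw [Fin.append_left, Fin.append_left, Fin.append_left]
          simp only [Pi.zero_apply, Pi.smul_apply, smul_eq_mul, mul_zero, add_zero]
          field_simp
        · simp only [Pi.add_apply, Pi.smul_apply, smul_eq_mul]
          rw [Fin.append_right, Fin.append_right, Fin.append_right]
          simp only [Pi.zero_apply, Pi.smul_apply, smul_eq_mul, mul_zero, zero_add]
          field_simp

/-- The key lattice-point characterization. -/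
lemma mem_freeSum_int {p d : ℕ} {P : Set (Fin p → ℝ)} (hd : 0 < d)
    (hPc : Convex ℝ P) (hP0 : (0 : Fin p → ℝ) ∈ P) (t : ℕ) (z : Fin (p + d) → ℤ) :
    cz z ∈ (t : ℝ) • freeSum P (Ssimplex d) ↔
      lev d (backI z) ≤ t ∧
        cz (frontI z) ∈ ((t - lev d (backI z) : ℕ) : ℝ) • P := by
  have ht : (0 : ℝ) ≤ (t : ℝ) := Nat.cast_nonneg t
  rw [show cz z = Fin.append (cz (frontI z)) (cz (backI z)) from by
    rw [← cz_append, append_frontI_backI]]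
  rw [mem_smul_freeSum hPc (Ssimplex_convex d) hP0 (zero_mem_Ssimplex hd) ht]
  constructor
  · rintro ⟨a, b, ha, hb, hab, hu, hv⟩
    have hlev : (lev d (backI z) : ℝ) ≤ b := (mem_smul_Ssimplex_int hd hb _).1 hv
    have h1 : lev d (backI z) ≤ t := by
      have : (lev d (backI z) : ℝ) ≤ (t : ℝ) := by linarith
      exact_mod_cast this
    refine ⟨h1, ?_⟩
    have hcast : ((t - lev d (backI z) : ℕ) : ℝ) = (t : ℝ) - lev d (backI z) := by
      push_cast [Nat.cast_sub h1]
      ring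
    refine smul_mono_mem hPc hP0 ha ?_ hu
    rw [hcast]
    linarith
  · rintro ⟨h1, hx⟩
    have hcast : ((t - lev d (backI z) : ℕ) : ℝ) = (t : ℝ) - lev d (backI z) := by
      push_cast [Nat.cast_sub h1]
      ring
    refine ⟨((t - lev d (backI z) : ℕ) : ℝ), (lev d (backI z) : ℝ),
      Nat.cast_nonneg _, Nat.cast_nonneg _, by rw [hcast]; ring, hx, ?_⟩
    exact (mem_smul_Ssimplex_int hd (Nat.cast_nonneg _) _).2 le_rfl

lemma frontI_append {p d : ℕ} (x : Fin p → ℤ) (y : Fin d → ℤ) :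
    frontI (Fin.append x y) = x := by
  funext i; exact Fin.append_left x y i

lemma backI_append {p d : ℕ} (x : Fin p → ℤ) (y : Fin d → ℤ) :
    backI (Fin.append x y) = y := by
  funext i; exact Fin.append_right x y i

/-- The Ehrhart series of a free sum with `S_d`. -/
lemma ehr_freeSum {p d : ℕ} (hd : 0 < d) {P : Set (Fin p → ℝ)}
    (hPc : Convex ℝ P) (hPb : Bornology.IsBounded P) (hP0 : (0 : Fin p → ℝ) ∈ P) :
    ehrhartSeries (freeSum P (Ssimplex d)) = ehrhartSeries P * Δser d := by
  classical
  ext t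
  rw [ehrhartSeries, PowerSeries.coeff_mk, PowerSeries.coeff_mul]
  rw [Finset.sum_congr rfl fun pq (_ : pq ∈ Finset.HasAntidiagonal.antidiagonal t) => by
    rw [ehrhartSeries, Δser, PowerSeries.coeff_mk, PowerSeries.coeff_mk]]
  rw [Finset.Nat.sum_antidiagonal_eq_sum_range_succ_mk]
  have hPfin : ∀ s : ℕ, {x : Fin p → ℤ | cz x ∈ (s : ℝ) • P}.Finite :=
    fun s => lattice_finite (hPb.smul₀ (s : ℝ))
  haveI hPfin' : ∀ s : ℕ, Finite {x : Fin p → ℤ // cz x ∈ (s : ℝ) • P} :=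
    fun s => (hPfin s).to_subtype
  haveI hlevfin : ∀ m : ℕ, Finite {y : Fin d → ℤ // lev d y = m} :=
    fun m => lev_fiber_finite hd m
  set f : {z : Fin (p + d) → ℤ // cz z ∈ (t : ℝ) • freeSum P (Ssimplex d)} →
      Fin (t + 1) := fun z => ⟨lev d (backI z.1), by
    have := ((mem_freeSum_int hd hPc hP0 t z.1).1 z.2).1
    omega⟩ with hfdef
  have hEq : ∀ b : Fin (t + 1),
      {z' : {z : Fin (p + d) → ℤ // cz z ∈ (t : ℝ) • freeSum P (Ssimplex d)} // f z' = b} ≃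
        ({x : Fin p → ℤ // cz x ∈ ((t - (b : ℕ) : ℕ) : ℝ) • P} ×
          {y : Fin d → ℤ // lev d y = (b : ℕ)}) := by
    intro b
    refine ⟨fun z' => (⟨frontI z'.1.1, ?_⟩, ⟨backI z'.1.1, ?_⟩),
      fun xy => ⟨⟨Fin.append xy.1.1 xy.2.1, ?_⟩, ?_⟩, ?_, ?_⟩
    · have hm := (mem_freeSum_int hd hPc hP0 t z'.1.1).1 z'.1.2
      have hb : lev d (backI z'.1.1) = (b : ℕ) := congrArg Fin.val z'.2
      rw [← hb]
      exact hm.2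
    · exact congrArg Fin.val z'.2
    · rw [mem_freeSum_int hd hPc hP0]
      rw [backI_append, frontI_append, xy.2.2]
      exact ⟨by have := b.isLt; omega, xy.1.2⟩
    · apply Fin.ext
      show lev d (backI (Fin.append xy.1.1 xy.2.1)) = (b : ℕ)
      rw [backI_append, xy.2.2]
    · intro z'
      apply Subtype.ext
      apply Subtype.ext
      show Fin.append (frontI z'.1.1) (backI z'.1.1) = z'.1.1
      exact append_frontI_backI _
    · intro xy
      refine Prod.ext ?_ ?_
      · apply Subtype.ext
        show frontI (Fin.append xy.1.1 xy.2.1) = xy.1.1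
        exact frontI_append _ _
      · apply Subtype.ext
        show backI (Fin.append xy.1.1 xy.2.1) = xy.2.1
        exact backI_append _ _
  haveI : ∀ b : Fin (t + 1),
      Finite {z' : {z : Fin (p + d) → ℤ // cz z ∈ (t : ℝ) • freeSum P (Ssimplex d)} //
        f z' = b} := fun b => Finite.of_equiv _ (hEq b).symm
  have main : Set.ncard {z : Fin (p + d) → ℤ | cz z ∈ (t : ℝ) • freeSum P (Ssimplex d)} =
      ∑ b : Fin (t + 1),
        Set.ncard {x : Fin p → ℤ | cz x ∈ ((t - (b : ℕ) : ℕ) : ℝ) • P} *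
          Nat.card {y : Fin d → ℤ // lev d y = (b : ℕ)} := by
    have h0 : Set.ncard {z : Fin (p + d) → ℤ | cz z ∈ (t : ℝ) • freeSum P (Ssimplex d)} =
        Nat.card {z : Fin (p + d) → ℤ // cz z ∈ (t : ℝ) • freeSum P (Ssimplex d)} :=
      (Nat.card_coe_set_eq _).symm
    rw [h0, Nat.card_congr (Equiv.sigmaFiberEquiv f).symm, card_sigma']
    refine Finset.sum_congr rfl fun b _ => ?_
    rw [Nat.card_congr (hEq b), Nat.card_prod]
    have h1 : Nat.card {x : Fin p → ℤ // cz x ∈ ((t - (b : ℕ) : ℕ) : ℝ) • P} =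
        Set.ncard {x : Fin p → ℤ | cz x ∈ ((t - (b : ℕ) : ℕ) : ℝ) • P} :=
      Nat.card_coe_set_eq _
    rw [h1]
  rw [main, Fin.sum_univ_eq_sum_range (fun k =>
    Set.ncard {x : Fin p → ℤ | cz x ∈ ((t - k : ℕ) : ℝ) • P} *
      Nat.card {y : Fin d → ℤ // lev d y = k}) (t + 1)]
  push_cast
  rw [← Finset.sum_range_reflect (fun k =>
    (Set.ncard {x : Fin p → ℤ | cz x ∈ ((k : ℕ) : ℝ) • P} : ℤ) *
      (Nat.card {y : Fin d → ℤ // lev d y = t - k} : ℤ)) (t + 1)]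
  refine Finset.sum_congr rfl fun k hk => ?_
  have hk' : k ≤ t := by
    have := Finset.mem_range.1 hk; omega
  rw [show t + 1 - 1 - k = t - k from by omega, show t - (t - k) = k from by omega]

lemma cast_ehr {a b : ℕ} (h : a = b) (hc : Set (Fin a → ℝ) = Set (Fin b → ℝ))
    (P : Set (Fin a → ℝ)) : ehrhartSeries (cast hc P) = ehrhartSeries P := by
  subst h
  rw [eq_of_heq (cast_heq hc P)]

lemma cast_good {a b : ℕ} (h : a = b) (hc : Set (Fin a → ℝ) = Set (Fin b → ℝ))
    {P : Set (Fin a → ℝ)} (h1 : Convex ℝ P) (h2 : Bornology.IsBounded P)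
    (h3 : (0 : Fin a → ℝ) ∈ P) :
    Convex ℝ (cast hc P) ∧ Bornology.IsBounded (cast hc P) ∧
      (0 : Fin b → ℝ) ∈ cast hc P := by
  subst h
  rw [eq_of_heq (cast_heq hc P)]
  exact ⟨h1, h2, h3⟩

lemma iter_good {n : ℕ} {Q : Set (Fin n → ℝ)} (hQc : Convex ℝ Q)
    (hQb : Bornology.IsBounded Q) (hQ0 : (0 : Fin n → ℝ) ∈ Q) (d : ℕ) :
    ∀ k, Convex ℝ (iterFreeSum Q d k) ∧ Bornology.IsBounded (iterFreeSum Q d k) ∧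
      (0 : Fin (n + k * d) → ℝ) ∈ iterFreeSum Q d k := by
  intro k
  induction k with
  | zero =>
    simp only [iterFreeSum]
    exact cast_good (by ring) _ hQc hQb hQ0
  | succ k ih =>
    simp only [iterFreeSum]
    refine cast_good (by ring) _ ?_ ?_ ?_
    · exact freeSum_convex _ _
    · exact freeSum_isBounded ih.2.1 (Ssimplex_isBounded d)
    · exact freeSum_zero_mem ih.2.2

end StmtAux

open StmtAux in
theorem stmt3 {n : ℕ} (Q : Set (Fin n → ℝ))
    (hQ : IsLatticePolytope Q) (hQfull : affineSpan ℝ Q = ⊤)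
    (h0 : (0 : Fin n → ℝ) ∈ interior Q) (k d : ℕ) (hk : 1 ≤ k) (hd : 1 ≤ d) :
    (1 - PowerSeries.X : PowerSeries ℤ) ^ (n + k * d + 1) *
        ehrhartSeries (iterFreeSum Q d k) =
      ((1 - PowerSeries.X) ^ (n + 1) * ehrhartSeries Q) *
        (∑ i ∈ Finset.range (d + 1), (PowerSeries.X : PowerSeries ℤ) ^ i) ^ k := by
  have hd' : 0 < d := hd
  obtain ⟨V, hV⟩ := hQ
  have hQc : Convex ℝ Q := hV ▸ convex_convexHull ℝ _
  have hQb : Bornology.IsBounded Q := by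
    rw [hV, isBounded_convexHull]
    exact ((V.finite_toSet).image _).isBounded
  have hQ0 : (0 : Fin n → ℝ) ∈ Q := interior_subset h0
  have hgood := iter_good hQc hQb hQ0 d
  clear hk hQfull h0 hV
  induction k with
  | zero =>
    simp only [iterFreeSum]
    rw [cast_ehr (show n = n + 0 * d by ring)]
    norm_num
  | succ k ih =>
    simp only [iterFreeSum]
    rw [cast_ehr (show n + k * d + d = n + (k + 1) * d by ring)]
    rw [ehr_freeSum hd' (hgood k).1 (hgood k).2.1 (hgood k).2.2]
    have hexp : n + (k + 1) * d + 1 = (n + k * d + 1) + d := by ring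
    rw [hexp, pow_add]
    calc (1 - PowerSeries.X : PowerSeries ℤ) ^ (n + k * d + 1) * (1 - PowerSeries.X) ^ d *
          (ehrhartSeries (iterFreeSum Q d k) * Δser d)
        = ((1 - PowerSeries.X) ^ (n + k * d + 1) * ehrhartSeries (iterFreeSum Q d k)) *
            ((1 - PowerSeries.X) ^ d * Δser d) := by ring
      _ = (((1 - PowerSeries.X) ^ (n + 1) * ehrhartSeries Q) *
            (∑ i ∈ Finset.range (d + 1), (PowerSeries.X : PowerSeries ℤ) ^ i) ^ k) *
            (∑ i ∈ Finset.range (d + 1), (PowerSeries.X : PowerSeries ℤ) ^ i) := by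
          rw [ih, delta_identity hd']
      _ = _ := by rw [pow_succ]; ring
end

section
/- Let Q ⊆ ℝ^n be an n-dimensional lattice polytope containing the origin in its interior and let k ≥ 1 be an integer. For d ≥ 1 let R_d := Q ⊕ S_d ⊕ ⋯ ⊕ S_d (iterated free sum with k copies of S_d) ⊆ ℝ^{n+kd}. Then there exists a formal power series F ∈ ℤ[[X]] with (1−X)^k·F(X) = (1−X)^{n+1}·Ehr_Q(X) such that for every j ≥ 0 there is an N with: for all d ≥ N, the coefficient of X^j in (1−X)^{n+kd+1}·Ehr_{R_d}(X) equals the X^j-coefficient of F. In other words, the h*-polynomials of the sequence (R_d) converge coefficientwise to h*(Q;X)/(1−X)^k in ℤ[[X]]. -/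
open scoped BigOperators Pointwise

namespace Stmt4Aux



noncomputable def psOne : PowerSeries ℤ := PowerSeries.mk fun _ => 1

lemma oneSub_mul_psOne : (1 - PowerSeries.X) * psOne = 1 := by
  ext n
  cases n with
  | zero => simp [psOne]
  | succ n => simp [sub_mul, psOne, PowerSeries.coeff_succ_X_mul]

def EqUpTo (j : ℕ) (A B : PowerSeries ℤ) : Prop :=
  ∀ m, m ≤ j → PowerSeries.coeff m A = PowerSeries.coeff m B

lemma EqUpTo.refl {j : ℕ} {A : PowerSeries ℤ} : EqUpTo j A A := fun _ _ => rfl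

lemma EqUpTo.mul {j : ℕ} {A A' B B' : PowerSeries ℤ} (h1 : EqUpTo j A A')
    (h2 : EqUpTo j B B') : EqUpTo j (A * B) (A' * B') := by
  intro m hm
  rw [PowerSeries.coeff_mul, PowerSeries.coeff_mul]
  refine Finset.sum_congr rfl fun p hp => ?_
  replace hp : p.1 + p.2 = m := Finset.HasAntidiagonal.mem_antidiagonal.mp hp
  rw [h1 p.1 (by omega), h2 p.2 (by omega)]

lemma EqUpTo.pow {j : ℕ} {A A' : PowerSeries ℤ} (h : EqUpTo j A A') (k : ℕ) :
    EqUpTo j (A ^ k) (A' ^ k) := by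
  induction k with
  | zero => simpa using EqUpTo.refl
  | succ k ih => rw [pow_succ, pow_succ]; exact ih.mul h

def realize {p : ℕ} (x : Fin p → ℤ) : Fin p → ℝ := fun i => (x i : ℝ)

lemma realize_inj {p : ℕ} : Function.Injective (realize (p := p)) := by
  intro x y h
  funext i
  have := congrFun h i
  simpa [realize] using this

lemma finite_lattice {p : ℕ} {B : Set (Fin p → ℝ)} (hB : Bornology.IsBounded B) :
    {x : Fin p → ℤ | realize x ∈ B}.Finite := by
  obtain ⟨r, hr⟩ := hB.subset_closedBall 0
  refine Set.Finite.subset (Set.finite_Icc (fun _ : Fin p => (-⌈r⌉ : ℤ)) fun _ => ⌈r⌉) ?_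
  intro x hx
  have hx2 := hr hx
  rw [Metric.mem_closedBall, dist_zero_right] at hx2
  have habs : ∀ i, |(x i : ℝ)| ≤ r := by
    intro i
    calc |(x i : ℝ)| = ‖realize x i‖ := rfl
      _ ≤ ‖realize x‖ := norm_le_pi_norm _ i
      _ ≤ r := hx2
  have habs' : ∀ i, |x i| ≤ ⌈r⌉ := by
    intro i
    have : ((|x i| : ℤ) : ℝ) ≤ (⌈r⌉ : ℝ) := by
      push_cast
      calc |(x i : ℝ)| ≤ r := habs i
        _ ≤ ⌈r⌉ := Int.le_ceil r
    exact_mod_cast this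
  rw [Set.mem_Icc]
  constructor <;> intro i
  · exact (abs_le.mp (habs' i)).1
  · exact (abs_le.mp (habs' i)).2

lemma coeff_ehrhart {p : ℕ} (P : Set (Fin p → ℝ)) (t : ℕ) :
    PowerSeries.coeff t (ehrhartSeries P) =
      ({x : Fin p → ℤ | realize x ∈ (t : ℝ) • P}.ncard : ℤ) := by
  simp only [ehrhartSeries, PowerSeries.coeff_mk]
  rfl

lemma smul_set_mono_convex {E : Type*} [AddCommGroup E] [Module ℝ E] {P : Set E}
    (hP : Convex ℝ P) (h0 : (0 : E) ∈ P) {a b : ℝ} (ha : 0 ≤ a) (hab : a ≤ b) :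
    a • P ⊆ b • P := by
  rintro _ ⟨x, hx, rfl⟩
  rcases eq_or_lt_of_le (ha.trans hab) with hb | hb
  · have ha0 : a = 0 := le_antisymm (hab.trans hb.symm.le) ha
    exact ⟨x, hx, by rw [ha0, ← hb]⟩
  · refine ⟨(a / b) • x, ?_, ?_⟩
    · have h1 : 0 ≤ a / b := div_nonneg ha hb.le
      have h2 : a / b ≤ 1 := (div_le_one hb).mpr hab
      have := hP h0 hx (by linarith : (0:ℝ) ≤ 1 - a / b) h1 (by ring)
      simpa using this
    · show b • (a / b) • x = a • x
      rw [smul_smul]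
      congr 1
      field_simp

lemma ncard_biUnion {α : Type*} (s : Finset ℕ) (f : ℕ → Set α)
    (h : ∀ i ∈ s, (f i).Finite) (hd : ∀ i ∈ s, ∀ j ∈ s, i ≠ j → Disjoint (f i) (f j)) :
    (⋃ i ∈ s, f i).ncard = ∑ i ∈ s, (f i).ncard := by
  classical
  induction s using Finset.induction with
  | empty => simp
  | @insert a s ha ih =>
    rw [Finset.sum_insert ha]
    have hU : (⋃ i ∈ insert a s, f i) = f a ∪ ⋃ i ∈ s, f i := by
      simp [Set.biUnion_insert]
    rw [hU]
    have hfin : (⋃ i ∈ s, f i).Finite :=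
      Set.Finite.biUnion s.finite_toSet fun i hi => h i (Finset.mem_insert_of_mem hi)
    rw [Set.ncard_union_eq ?_ (h a (Finset.mem_insert_self a s)) hfin]
    · rw [ih (fun i hi => h i (Finset.mem_insert_of_mem hi))
        (fun i hi j hj hij => hd i (Finset.mem_insert_of_mem hi) j (Finset.mem_insert_of_mem hj) hij)]
    · rw [Set.disjoint_iff_inter_eq_empty]
      ext z
      simp only [Set.mem_inter_iff, Set.mem_iUnion, Set.mem_empty_iff_false, iff_false, not_and]
      rintro hza ⟨i, hi, hzi⟩
      have := hd a (Finset.mem_insert_self a s) i (Finset.mem_insert_of_mem hi)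
        (by rintro rfl; exact ha hi)
      exact (Set.disjoint_left.mp this hza) hzi

lemma ncard_prod {α β : Type*} {s : Set α} {t : Set β} (hs : s.Finite) (ht : t.Finite) :
    (s ×ˢ t).ncard = s.ncard * t.ncard := by
  rw [Set.ncard_eq_toFinset_card _ (hs.prod ht), Set.ncard_eq_toFinset_card _ hs,
    Set.ncard_eq_toFinset_card _ ht, ← Finset.card_product, Set.Finite.toFinset_prod]





def Verts (d : ℕ) : Set (Fin d → ℝ) :=
  (Set.range fun i : Fin d => fun j : Fin d => if j = i then (1 : ℝ) else 0) ∪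
    {fun _ : Fin d => (-1 : ℝ)}

lemma Ssimplex_eq (d : ℕ) : Ssimplex d = convexHull ℝ (Verts d) := rfl

def Scond (d : ℕ) (μ : ℝ) (y : Fin d → ℝ) : Prop :=
  (∑ i, y i) ≤ μ ∧ ∀ i, (∑ j, y j) - (d + 1) * y i ≤ μ

lemma convex_Scond (d : ℕ) (μ : ℝ) : Convex ℝ {y | Scond d μ y} := by
  have hset : {y : Fin d → ℝ | Scond d μ y} =
      {y : Fin d → ℝ | (∑ i, y i) ≤ μ} ∩
        ⋂ i : Fin d, {y : Fin d → ℝ | (∑ j, y j) - (d + 1) * y i ≤ μ} := by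
    ext y
    simp [Scond, Set.mem_iInter]
  rw [hset]
  refine Convex.inter ?_ (convex_iInter fun i => ?_)
  · refine convex_halfSpace_le ?_ μ
    exact { map_add := fun x y => by simp [Finset.sum_add_distrib]
            map_smul := fun c x => by simp [Finset.mul_sum] }
  · refine convex_halfSpace_le ?_ μ
    refine { map_add := fun x y => by
               simp only [Pi.add_apply, Finset.sum_add_distrib]; ring
             map_smul := fun c x => by
               simp only [Pi.smul_apply, smul_eq_mul, ← Finset.mul_sum]; ring }

lemma verts_subset_Scond (d : ℕ) : Verts d ⊆ {y | Scond d 1 y} := by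
  rintro v (⟨i, rfl⟩ | hv)
  · constructor
    · rw [Finset.sum_ite_eq' Finset.univ i fun _ => (1:ℝ)]
      simp
    · intro i'
      rw [Finset.sum_ite_eq' Finset.univ i fun _ => (1:ℝ)]
      simp only [Finset.mem_univ, if_true]
      by_cases h : i' = i
      · subst h
        have hd0 : (0:ℝ) ≤ (d:ℝ) := Nat.cast_nonneg d
        simp only [if_pos rfl, if_true, mul_one]
        linarith
      · simp [h]
  · rw [Set.mem_singleton_iff] at hv
    subst hv
    constructor
    · simp only [Finset.sum_const, Finset.card_univ, Fintype.card_fin, nsmul_eq_mul, mul_neg,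
        mul_one]
      have : (0:ℝ) ≤ d := Nat.cast_nonneg d
      linarith
    · intro i
      simp only [Finset.sum_const, Finset.card_univ, Fintype.card_fin, nsmul_eq_mul, mul_neg,
        mul_one]
      ring_nf
      linarith

lemma mem_Ssimplex {d : ℕ} (hd : 1 ≤ d) {y : Fin d → ℝ} :
    y ∈ Ssimplex d ↔ Scond d 1 y := by
  constructor
  · intro hy
    exact convexHull_min (verts_subset_Scond d) (convex_Scond d 1) hy
  · rintro ⟨h1, h2⟩
    have hd1 : (0:ℝ) < (d:ℝ) + 1 := by positivity
    set c0 : ℝ := (1 - ∑ i, y i) / ((d:ℝ) + 1) with hc0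
    have hc0nn : 0 ≤ c0 := div_nonneg (by linarith) hd1.le
    set w : Option (Fin d) → ℝ := fun o => Option.elim o c0 (fun i => y i + c0) with hw
    have hwi : ∀ i : Fin d, 0 ≤ y i + c0 := by
      intro i
      have h3 : 0 ≤ (((d:ℝ) + 1) * y i + (1 - ∑ j, y j)) := by linarith [h2 i]
      have h4 : y i + c0 = (((d:ℝ) + 1) * y i + (1 - ∑ j, y j)) / ((d:ℝ) + 1) := by
        rw [hc0, eq_div_iff hd1.ne', add_mul, div_mul_cancel₀ _ hd1.ne']
        ring
      rw [h4]
      exact div_nonneg h3 hd1.le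
    have hwnn : ∀ o ∈ (Finset.univ : Finset (Option (Fin d))), 0 ≤ w o := by
      rintro (_ | i) -
      · exact hc0nn
      · exact hwi i
    have hsum : ∑ o ∈ (Finset.univ : Finset (Option (Fin d))), w o = 1 := by
      rw [Fintype.sum_option]
      have hs2 : ∑ i : Fin d, (y i + c0) = (∑ i, y i) + (d:ℝ) * c0 := by
        rw [Finset.sum_add_distrib, Finset.sum_const, Finset.card_univ, Fintype.card_fin,
          nsmul_eq_mul]
      show c0 + ∑ i : Fin d, (y i + c0) = 1
      rw [hs2, hc0]
      field_simp
      ring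
    set z : Option (Fin d) → (Fin d → ℝ) :=
      fun o => Option.elim o (fun _ => (-1:ℝ)) (fun i => fun j => if j = i then 1 else 0) with hz
    have hzmem : ∀ o ∈ (Finset.univ : Finset (Option (Fin d))), z o ∈ Verts d := by
      rintro (_ | i) -
      · exact Or.inr rfl
      · exact Or.inl ⟨i, rfl⟩
    have key := Finset.centerMass_mem_convexHull (Finset.univ : Finset (Option (Fin d)))
      hwnn (by rw [hsum]; norm_num) hzmem
    rw [Finset.centerMass_eq_of_sum_1 _ z hsum] at key
    have hyeq : ∑ o ∈ (Finset.univ : Finset (Option (Fin d))), w o • z o = y := by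
      funext j
      rw [Finset.sum_apply]
      rw [show ∑ o ∈ (Finset.univ : Finset (Option (Fin d))), (w o • z o) j
          = ∑ o : Option (Fin d), w o * z o j from Finset.sum_congr rfl fun o _ => rfl]
      rw [Fintype.sum_option]
      have : ∀ i : Fin d, w (some i) * z (some i) j = if j = i then y i + c0 else 0 := by
        intro i
        simp only [hw, hz, Option.elim]
        by_cases h : j = i <;> simp [h]
      rw [Finset.sum_congr rfl fun i _ => this i, Finset.sum_ite_eq Finset.univ j
        (fun i => y i + c0)]
      simp only [hw, hz, Option.elim, Finset.mem_univ, if_true]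
      ring
    rw [hyeq] at key
    exact key

lemma Ssimplex_nonempty (d : ℕ) : (Ssimplex d).Nonempty :=
  ⟨fun _ => (-1:ℝ), subset_convexHull ℝ _ (Or.inr rfl)⟩

lemma mem_smul_Ssimplex {d : ℕ} (hd : 1 ≤ d) {μ : ℝ} (hμ : 0 ≤ μ) {y : Fin d → ℝ} :
    y ∈ μ • Ssimplex d ↔ Scond d μ y := by
  rcases eq_or_lt_of_le hμ with hμ0 | hμpos
  · subst hμ0
    rw [Set.zero_smul_set (Ssimplex_nonempty d)]
    constructor
    · rintro rfl
      constructor <;> simp [Scond]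
    · rintro ⟨h1, h2⟩
      have hsum : ∑ i : Fin d, ((∑ j, y j) - ((d:ℝ) + 1) * y i)
          = (d:ℝ) * (∑ j, y j) - ((d:ℝ) + 1) * ∑ i, y i := by
        rw [Finset.sum_sub_distrib, Finset.sum_const, Finset.card_univ, Fintype.card_fin,
          nsmul_eq_mul, ← Finset.mul_sum]
      have h4 : ∑ i : Fin d, ((∑ j, y j) - ((d:ℝ) + 1) * y i) ≤ 0 := by
        apply Finset.sum_nonpos
        intro i _
        exact h2 i
      have h5 : 0 ≤ ∑ j, y j := by
        rw [hsum] at h4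
        nlinarith
      have h6 : ∑ j, y j = 0 := le_antisymm h1 h5
      have h7 : ∀ i, 0 ≤ y i := by
        intro i
        have := h2 i
        rw [h6] at this
        nlinarith
      have h8 : ∀ i, y i = 0 := by
        intro i
        have := Finset.sum_eq_zero_iff_of_nonneg (fun i _ => h7 i) |>.mp h6
        exact this i (Finset.mem_univ i)
      change y = 0
      funext i
      exact h8 i
  · constructor
    · rintro ⟨s, hs, rfl⟩
      obtain ⟨h1, h2⟩ := (mem_Ssimplex hd).mp hs
      constructor
      · show ∑ i, μ * s i ≤ μ
        rw [← Finset.mul_sum]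
        nlinarith
      · intro i
        show (∑ j, μ * s j) - ((d:ℝ) + 1) * (μ * s i) ≤ μ
        rw [← Finset.mul_sum]
        nlinarith [h2 i]
    · rintro ⟨h1, h2⟩
      refine ⟨μ⁻¹ • y, ?_, show μ • μ⁻¹ • y = y by rw [smul_smul, mul_inv_cancel₀ hμpos.ne', one_smul]⟩
      rw [mem_Ssimplex hd]
      constructor
      · show ∑ i, μ⁻¹ * y i ≤ 1
        rw [← Finset.mul_sum]
        rw [inv_mul_le_iff₀ hμpos]
        simpa using h1
      · intro i
        show (∑ j, μ⁻¹ * y j) - ((d:ℝ) + 1) * (μ⁻¹ * y i) ≤ 1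
        rw [← Finset.mul_sum]
        have := h2 i
        have hrw : μ⁻¹ * (∑ j, y j) - ((d:ℝ) + 1) * (μ⁻¹ * y i)
            = μ⁻¹ * ((∑ j, y j) - ((d:ℝ) + 1) * y i) := by ring
        rw [hrw, inv_mul_le_iff₀ hμpos]
        simpa using this





lemma mem_dilate_int {d : ℕ} (hd : 1 ≤ d) (y : Fin d → ℤ) (m : ℕ) :
    realize y ∈ (m : ℝ) • Ssimplex d ↔
      ((∑ i, y i) ≤ (m : ℤ) ∧ ∀ i, (∑ j, y j) - ((d : ℤ) + 1) * y i ≤ (m : ℤ)) := by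
  rw [mem_smul_Ssimplex hd (by positivity : (0:ℝ) ≤ (m:ℝ))]
  unfold Scond realize
  constructor
  · rintro ⟨h1, h2⟩
    constructor
    · exact_mod_cast h1
    · intro i
      have := h2 i
      exact_mod_cast this
  · rintro ⟨h1, h2⟩
    constructor
    · exact_mod_cast h1
    · intro i
      have := h2 i
      exact_mod_cast this

noncomputable def lev {d : ℕ} (y : Fin d → ℤ) : ℕ :=
  (∑ i, y i).toNat ⊔ Finset.univ.sup fun i => ((∑ j, y j) - ((d : ℤ) + 1) * y i).toNat

lemma toNat_le_nat {a : ℤ} {m : ℕ} : a.toNat ≤ m ↔ a ≤ (m : ℤ) := Int.toNat_le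

lemma lev_le_iff {d : ℕ} (hd : 1 ≤ d) (y : Fin d → ℤ) (m : ℕ) :
    lev y ≤ m ↔ realize y ∈ (m : ℝ) • Ssimplex d := by
  rw [mem_dilate_int hd y m]
  unfold lev
  rw [sup_le_iff, Finset.sup_le_iff]
  constructor
  · rintro ⟨h1, h2⟩
    exact ⟨toNat_le_nat.mp h1, fun i => toNat_le_nat.mp (h2 i (Finset.mem_univ i))⟩
  · rintro ⟨h1, h2⟩
    exact ⟨toNat_le_nat.mpr h1, fun i _ => toNat_le_nat.mpr (h2 i)⟩

lemma lev_le_real {d : ℕ} (hd : 1 ≤ d) (y : Fin d → ℤ) {μ : ℝ} (hμ : 0 ≤ μ) :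
    realize y ∈ μ • Ssimplex d ↔ ((lev y : ℕ) : ℝ) ≤ μ := by
  have hcast : ∀ a : ℤ, (((a.toNat : ℕ) : ℝ) ≤ μ ↔ (a : ℝ) ≤ μ) := by
    intro a
    have h1 : ((a.toNat : ℕ) : ℝ) = ((a.toNat : ℤ) : ℝ) := by push_cast; rfl
    rw [h1, Int.toNat_eq_max]
    push_cast
    rw [max_le_iff]
    exact ⟨fun h => h.1, fun h => ⟨h, hμ⟩⟩
  rw [mem_smul_Ssimplex hd hμ]
  unfold Scond realize lev
  rw [Nat.cast_max, max_le_iff]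
  have hsum : (((∑ i, y i : ℤ)) : ℝ) = ∑ i, (y i : ℝ) := by push_cast; rfl
  have hterm : ∀ i, ((((∑ j, y j) - ((d : ℤ) + 1) * y i : ℤ)) : ℝ)
      = (∑ j, (y j : ℝ)) - ((d : ℝ) + 1) * (y i : ℝ) := by intro i; push_cast; ring
  constructor
  · rintro ⟨h1, h2⟩
    refine ⟨(hcast _).mpr (by rw [hsum]; exact h1), ?_⟩
    have hne : (Finset.univ : Finset (Fin d)).Nonempty := ⟨⟨0, hd⟩, Finset.mem_univ _⟩
    obtain ⟨i0, -, hi0⟩ := Finset.exists_mem_eq_sup Finset.univ hne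
      fun i => ((∑ j, y j) - ((d : ℤ) + 1) * y i).toNat
    rw [hi0]
    exact (hcast _).mpr (by rw [hterm]; exact h2 i0)
  · rintro ⟨h1, h2⟩
    constructor
    · rw [← hsum]; exact (hcast _).mp h1
    · intro i
      rw [← hterm]
      refine (hcast _).mp (le_trans ?_ h2)
      exact_mod_cast Nat.cast_le.mpr
        (Finset.le_sup (f := fun i => ((∑ j, y j) - ((d : ℤ) + 1) * y i).toNat) (Finset.mem_univ i))

def Weq (q m : ℕ) : Set (Fin q → ℕ) := {w | ∑ i, w i = m}
def Wle (q m : ℕ) : Set (Fin q → ℕ) := {w | ∑ i, w i ≤ m}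

lemma Wle_finite (q m : ℕ) : (Wle q m).Finite := by
  refine Set.Finite.subset (Set.finite_Icc (fun _ : Fin q => 0) fun _ => m) ?_
  intro w hw
  rw [Set.mem_Icc]
  refine ⟨fun i => Nat.zero_le _, fun i => ?_⟩
  exact le_trans (Finset.single_le_sum (fun j _ => Nat.zero_le (w j)) (Finset.mem_univ i)) hw

lemma Weq_finite (q m : ℕ) : (Weq q m).Finite :=
  (Wle_finite q m).subset fun w hw => le_of_eq hw

noncomputable def Cser (q : ℕ) : PowerSeries ℤ := PowerSeries.mk fun m => ((Weq q m).ncard : ℤ)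

lemma Cser_zero : Cser 0 = 1 := by
  ext m
  cases m with
  | zero =>
    have : Weq 0 0 = Set.univ := by
      ext w
      simp [Weq]
    simp [Cser, this, Set.ncard_univ]
  | succ m =>
    have : Weq 0 (m + 1) = ∅ := by
      ext w
      simp [Weq]
    simp [Cser, this]

lemma Cser_succ (q : ℕ) : Cser (q + 1) = psOne * Cser q := by
  ext m
  have hpart : Weq (q + 1) m
      = ⋃ k ∈ Finset.range (m + 1), (fun w : Fin q → ℕ => Fin.cons (α := fun _ : Fin (q+1) => ℕ) k w) '' Weq q (m - k) := by
    ext w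
    simp only [Set.mem_iUnion, Set.mem_image, Finset.mem_range]
    constructor
    · intro hw
      have hw' : ∑ i, w i = m := hw
      have hsum : w 0 + ∑ i : Fin q, w i.succ = m := by
        rw [← Fin.sum_univ_succ]; exact hw'
      exact ⟨w 0, by omega, fun i => w i.succ,
        by show ∑ i : Fin q, w i.succ = m - w 0; omega, Fin.cons_self_tail w⟩
    · rintro ⟨k, hk, w', hw', rfl⟩
      show ∑ i, Fin.cons k w' i = m
      rw [Fin.sum_univ_succ]
      simp only [Fin.cons_zero, Fin.cons_succ]
      have hw'' : ∑ i, w' i = m - k := hw'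
      omega
  have hfin : ∀ k ∈ Finset.range (m + 1),
      ((fun w : Fin q → ℕ => Fin.cons (α := fun _ : Fin (q+1) => ℕ) k w) '' Weq q (m - k)).Finite :=
    fun k _ => (Weq_finite q _).image _
  have hdisj : ∀ k ∈ Finset.range (m + 1), ∀ k' ∈ Finset.range (m + 1), k ≠ k' →
      Disjoint ((fun w : Fin q → ℕ => Fin.cons (α := fun _ : Fin (q+1) => ℕ) k w) '' Weq q (m - k))
        ((fun w : Fin q → ℕ => Fin.cons (α := fun _ : Fin (q+1) => ℕ) k' w) '' Weq q (m - k')) := by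
    intro k _ k' _ hkk'
    rw [Set.disjoint_left]
    rintro z ⟨w, -, rfl⟩ ⟨w', -, hz⟩
    apply hkk'
    have := congrFun hz 0
    simpa [Fin.cons_zero] using this.symm
  rw [PowerSeries.coeff_mul, Finset.Nat.sum_antidiagonal_eq_sum_range_succ_mk]
  simp only [Cser, psOne, PowerSeries.coeff_mk, one_mul]
  rw [hpart, ncard_biUnion _ _ hfin hdisj]
  push_cast
  refine Finset.sum_congr rfl fun k _ => ?_
  rw [Set.ncard_image_of_injective _
    (Fin.cons_right_injective (α := fun _ : Fin (q+1) => ℕ) k)]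

lemma Cser_eq (q : ℕ) : Cser q = psOne ^ q := by
  induction q with
  | zero => rw [Cser_zero, pow_zero]
  | succ q ih => rw [Cser_succ, ih, pow_succ, mul_comm]





lemma ehrS_coeff {d : ℕ} (hd : 1 ≤ d) {m : ℕ} (hm : m ≤ d) :
    PowerSeries.coeff m (ehrhartSeries (Ssimplex d)) =
      PowerSeries.coeff m (psOne ^ (d + 2)) := by
  rw [coeff_ehrhart]
  set Ψ : (Fin (d + 1) → ℕ) → (Fin d → ℤ) :=
    fun w i => (w i.castSucc : ℤ) - w (Fin.last d) with hΨ
  have himg : Ψ '' Wle (d + 1) m = {y : Fin d → ℤ | realize y ∈ (m : ℝ) • Ssimplex d} := by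
    ext y
    simp only [Set.mem_image, Set.mem_setOf_eq]
    rw [mem_dilate_int hd y m]
    constructor
    · rintro ⟨w, hw, rfl⟩
      have hw0 : ∑ i : Fin (d+1), w i ≤ m := hw
      have hw' : ((∑ i : Fin (d+1), w i : ℕ) : ℤ) ≤ (m : ℤ) := by exact_mod_cast hw0
      have hsplit : ((∑ i : Fin (d+1), w i : ℕ) : ℤ)
          = (∑ i : Fin d, (w i.castSucc : ℤ)) + (w (Fin.last d) : ℤ) := by
        push_cast
        rw [Fin.sum_univ_castSucc (f := fun i : Fin (d+1) => (w i : ℤ))]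
      set A := ∑ i : Fin d, (w i.castSucc : ℤ) with hA
      set a := (w (Fin.last d) : ℤ) with ha
      have hAa : A + a ≤ (m : ℤ) := by rw [hsplit] at hw'; exact hw'
      have hanon : (0:ℤ) ≤ a := Int.ofNat_nonneg _
      have hcnon : ∀ i : Fin d, (0:ℤ) ≤ (w i.castSucc : ℤ) := fun i => Int.ofNat_nonneg _
      have hsy : ∑ i, Ψ w i = A - (d : ℤ) * a := by
        show ∑ i : Fin d, ((w i.castSucc : ℤ) - a) = A - (d:ℤ) * a
        rw [Finset.sum_sub_distrib, Finset.sum_const, Finset.card_univ, Fintype.card_fin,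
          nsmul_eq_mul]
      constructor
      · rw [hsy]
        have hda : 0 ≤ (d:ℤ) * a := by positivity
        linarith
      · intro i
        have hyi : Ψ w i = (w i.castSucc : ℤ) - a := rfl
        rw [hsy, hyi]
        have hpos : 0 ≤ ((d:ℤ)+1) * (w i.castSucc : ℤ) := by positivity
        have expand : A - (d:ℤ)*a - ((d:ℤ)+1)*((w i.castSucc:ℤ) - a)
            = A + a - ((d:ℤ)+1)*(w i.castSucc:ℤ) := by ring
        rw [expand]
        linarith
    · rintro ⟨h1, h2⟩
      set a : ℕ := Finset.univ.sup (fun i : Fin d => (-(y i)).toNat) with ha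
      have hya : ∀ i, 0 ≤ y i + (a:ℤ) := by
        intro i
        have h3 : (-(y i)).toNat ≤ a := by
          rw [ha]
          exact Finset.le_sup (f := fun i : Fin d => (-(y i)).toNat) (Finset.mem_univ i)
        have h4 : (-(y i)) ≤ ((-(y i)).toNat : ℤ) := Int.self_le_toNat _
        have h5 : (((-(y i)).toNat : ℕ) : ℤ) ≤ (a : ℤ) := by exact_mod_cast h3
        linarith
      set w0 : Fin (d+1) → ℕ :=
        Fin.snoc (α := fun _ : Fin (d+1) => ℕ) (fun i => (y i + (a:ℤ)).toNat) a with hw0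
      have hw0cs : ∀ i : Fin d, w0 i.castSucc = (y i + (a:ℤ)).toNat := by
        intro i; rw [hw0]; exact Fin.snoc_castSucc _ _ i
      have hw0l : w0 (Fin.last d) = a := by rw [hw0]; exact Fin.snoc_last _ _
      have hsum : ((∑ i : Fin (d+1), w0 i : ℕ) : ℤ) = (∑ i : Fin d, y i) + ((d:ℤ)+1) * a := by
        push_cast
        rw [Fin.sum_univ_castSucc (f := fun i : Fin (d+1) => (w0 i : ℤ))]
        have : ∑ i : Fin d, ((w0 i.castSucc : ℕ) : ℤ) = ∑ i : Fin d, (y i + (a:ℤ)) := by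
          refine Finset.sum_congr rfl fun i _ => ?_
          rw [hw0cs i, Int.toNat_of_nonneg (hya i)]
        rw [this, hw0l, Finset.sum_add_distrib, Finset.sum_const, Finset.card_univ,
          Fintype.card_fin, nsmul_eq_mul]
        ring
      have hle : ((∑ i : Fin (d+1), w0 i : ℕ) : ℤ) ≤ (m : ℤ) := by
        rw [hsum]
        rcases Nat.eq_zero_or_pos a with ha0 | hapos
        · rw [ha0]
          push_cast
          linarith
        · have hne : (Finset.univ : Finset (Fin d)).Nonempty := ⟨⟨0, hd⟩, Finset.mem_univ _⟩
          obtain ⟨i0, -, hi0⟩ := Finset.exists_mem_eq_sup Finset.univ hne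
            (fun i : Fin d => (-(y i)).toNat)
          have hai0 : a = (-(y i0)).toNat := by rw [ha, hi0]
          have hyneg : 0 ≤ -(y i0) := by
            by_contra hcon
            push_neg at hcon
            have : (-(y i0)).toNat = 0 := Int.toNat_of_nonpos (le_of_lt hcon)
            omega
          have haz : (a : ℤ) = -(y i0) := by rw [hai0, Int.toNat_of_nonneg hyneg]
          have := h2 i0
          rw [haz]
          linarith
      refine ⟨w0, ?_, ?_⟩
      · show ∑ i : Fin (d+1), w0 i ≤ m
        exact_mod_cast hle
      · funext i
        show ((w0 i.castSucc : ℕ) : ℤ) - ((w0 (Fin.last d) : ℕ) : ℤ) = y i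
        rw [hw0cs i, hw0l, Int.toNat_of_nonneg (hya i)]
        ring
  have hinj : Set.InjOn Ψ (Wle (d + 1) m) := by
    intro w hw w' hw' heq
    have key : ∀ (b b' S S' : ℤ), S + (d:ℤ)*(b'-b) = S' → S + b ≤ (m:ℤ) → S' + b' ≤ (m:ℤ) →
        0 ≤ S → 0 ≤ b → 0 ≤ b' → b' ≤ b := by
      intro b b' S S' hS hb hb' hSnn hbnn hb'nn
      by_contra hlt
      push_neg at hlt
      have h1 : (1:ℤ) ≤ b' - b := by omega
      have h2 : (d:ℤ) * 1 ≤ (d:ℤ) * (b' - b) :=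
        mul_le_mul_of_nonneg_left h1 (by positivity)
      have hmd : (m:ℤ) ≤ (d:ℤ) := by exact_mod_cast hm
      linarith
    set a := (w (Fin.last d) : ℤ) with hadef
    set a' := (w' (Fin.last d) : ℤ) with ha'def
    set S := ∑ i : Fin d, (w i.castSucc : ℤ) with hS
    set S' := ∑ i : Fin d, (w' i.castSucc : ℤ) with hS'
    have hcomp : ∀ i : Fin d, (w' i.castSucc : ℤ) = (w i.castSucc : ℤ) + (a' - a) := by
      intro i
      have h := congrFun heq i
      simp only [hΨ] at h
      omega
    have hsq : S + (d:ℤ) * (a' - a) = S' := by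
      rw [hS', Finset.sum_congr rfl fun i _ => hcomp i, Finset.sum_add_distrib,
        Finset.sum_const, Finset.card_univ, Fintype.card_fin, nsmul_eq_mul, hS]
    have hsplit : ∀ v : Fin (d+1) → ℕ, ((∑ i : Fin (d+1), v i : ℕ) : ℤ)
        = (∑ i : Fin d, (v i.castSucc : ℤ)) + (v (Fin.last d) : ℤ) := by
      intro v
      push_cast
      rw [Fin.sum_univ_castSucc (f := fun i : Fin (d+1) => (v i : ℤ))]
    have hwle : S + a ≤ (m:ℤ) := by
      rw [← hsplit w]
      exact_mod_cast (hw : ∑ i : Fin (d+1), w i ≤ m)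
    have hwle' : S' + a' ≤ (m:ℤ) := by
      rw [← hsplit w']
      exact_mod_cast (hw' : ∑ i : Fin (d+1), w' i ≤ m)
    have hSnn : 0 ≤ S := Finset.sum_nonneg fun i _ => Int.ofNat_nonneg _
    have hS'nn : 0 ≤ S' := Finset.sum_nonneg fun i _ => Int.ofNat_nonneg _
    have hann : 0 ≤ a := Int.ofNat_nonneg _
    have ha'nn : 0 ≤ a' := Int.ofNat_nonneg _
    have h1 : a' ≤ a := key a a' S S' hsq hwle hwle' hSnn hann ha'nn
    have h2 : a ≤ a' := by
      refine key a' a S' S ?_ hwle' hwle hS'nn ha'nn hann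
      linarith [hsq]
    have haa : a = a' := le_antisymm h2 h1
    funext j
    refine Fin.lastCases ?_ (fun i => ?_) j
    · have hq := haa
      rw [hadef, ha'def] at hq
      exact_mod_cast hq
    · have := hcomp i
      rw [← haa] at this
      simp only [sub_self, add_zero] at this
      exact_mod_cast this.symm
  have hcard : {y : Fin d → ℤ | realize y ∈ (m : ℝ) • Ssimplex d}.ncard = (Wle (d+1) m).ncard := by
    rw [← himg, Set.ncard_image_of_injOn hinj]
  have hWle : Wle (d+1) m = ⋃ k ∈ Finset.range (m+1), Weq (d+1) k := by
    ext w
    simp only [Set.mem_iUnion, Finset.mem_range]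
    constructor
    · intro hw
      have hw' : ∑ i, w i ≤ m := hw
      exact ⟨∑ i, w i, by omega, rfl⟩
    · rintro ⟨k, hk, hkw⟩
      show ∑ i, w i ≤ m
      have hh : ∑ i, w i = k := hkw
      rw [hh]
      omega
  have hcount : (Wle (d+1) m).ncard = ∑ k ∈ Finset.range (m+1), (Weq (d+1) k).ncard := by
    rw [hWle]
    refine ncard_biUnion _ _ (fun k _ => Weq_finite _ _) ?_
    intro k _ k' _ hkk'
    rw [Set.disjoint_left]
    intro w hwk hwk'
    exact hkk' ((hwk : ∑ i, w i = k).symm.trans (hwk' : ∑ i, w i = k'))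
  have hR : PowerSeries.coeff m (psOne ^ (d+2))
      = ∑ k ∈ Finset.range (m+1), ((Weq (d+1) k).ncard : ℤ) := by
    rw [show d + 2 = (d+1) + 1 from rfl, pow_succ, ← Cser_eq, PowerSeries.coeff_mul,
      Finset.Nat.sum_antidiagonal_eq_sum_range_succ_mk]
    refine Finset.sum_congr rfl fun k _ => ?_
    simp [Cser, psOne]
  rw [hcard, hcount, hR]
  push_cast
  rfl





lemma append_add {p q : ℕ} (x x' : Fin p → ℝ) (y y' : Fin q → ℝ) :
    Fin.append (x + x') (y + y') = Fin.append x y + Fin.append x' y' := by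
  funext j
  refine Fin.addCases (fun i => ?_) (fun i => ?_) j <;>
    simp [Fin.append_left, Fin.append_right]

lemma append_smul {p q : ℕ} (c : ℝ) (x : Fin p → ℝ) (y : Fin q → ℝ) :
    Fin.append (c • x) (c • y) = c • Fin.append x y := by
  funext j
  refine Fin.addCases (fun i => ?_) (fun i => ?_) j <;>
    simp [Fin.append_left, Fin.append_right]

lemma append_zero_zero {p q : ℕ} : Fin.append (0 : Fin p → ℝ) (0 : Fin q → ℝ) = 0 := by
  funext j
  refine Fin.addCases (fun i => ?_) (fun i => ?_) j <;>
    simp [Fin.append_left, Fin.append_right]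

lemma realize_append {p q : ℕ} (x : Fin p → ℤ) (y : Fin q → ℤ) :
    realize (Fin.append x y) = Fin.append (realize x) (realize y) := by
  funext j
  refine Fin.addCases (fun i => ?_) (fun i => ?_) j <;>
    simp [realize, Fin.append_left, Fin.append_right]

lemma append_decomp {α : Type*} {p q : ℕ} (z : Fin (p + q) → α) :
    Fin.append (fun i => z (Fin.castAdd q i)) (fun i => z (Fin.natAdd p i)) = z := by
  funext j
  refine Fin.addCases (fun i => ?_) (fun i => ?_) j <;>
    simp [Fin.append_left, Fin.append_right]

lemma realize_zero {p : ℕ} : realize (0 : Fin p → ℤ) = 0 := by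
  funext i; simp [realize]

noncomputable def inlLM (p q : ℕ) : (Fin p → ℝ) →ₗ[ℝ] (Fin (p + q) → ℝ) where
  toFun := fun x => Fin.append x 0
  map_add' := fun x x' => by rw [← append_add, add_zero]
  map_smul' := fun c x => by
    simp only [RingHom.id_apply]
    rw [← append_smul, smul_zero]

noncomputable def inrLM (p q : ℕ) : (Fin q → ℝ) →ₗ[ℝ] (Fin (p + q) → ℝ) where
  toFun := fun y => Fin.append 0 y
  map_add' := fun y y' => by rw [← append_add, add_zero]
  map_smul' := fun c y => by
    simp only [RingHom.id_apply]
    rw [← append_smul, smul_zero]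

lemma zero_mem_Ssimplex {d : ℕ} (hd : 1 ≤ d) : (0 : Fin d → ℝ) ∈ Ssimplex d := by
  rw [mem_Ssimplex hd]
  constructor
  · simp
  · intro i
    simp

lemma convex_Ssimplex (d : ℕ) : Convex ℝ (Ssimplex d) := convex_convexHull ℝ _

lemma bounded_Ssimplex (d : ℕ) : Bornology.IsBounded (Ssimplex d) := by
  refine isBounded_convexHull.mpr ?_
  exact (((Set.finite_range _).union (Set.finite_singleton _)).isBounded)

lemma bounded_smul {p : ℕ} {B : Set (Fin p → ℝ)} (hB : Bornology.IsBounded B) (t : ℝ) :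
    Bornology.IsBounded (t • B) := hB.smul₀ t

lemma freeSum_convex {p q : ℕ} (P : Set (Fin p → ℝ)) (S : Set (Fin q → ℝ)) :
    Convex ℝ (freeSum P S) := convex_convexHull ℝ _

lemma zero_mem_freeSum {p q : ℕ} {P : Set (Fin p → ℝ)} {S : Set (Fin q → ℝ)}
    (h0 : (0 : Fin p → ℝ) ∈ P) : (0 : Fin (p + q) → ℝ) ∈ freeSum P S :=
  subset_convexHull ℝ _ (Or.inl ⟨0, h0, append_zero_zero⟩)

lemma freeSum_bounded {p q : ℕ} {P : Set (Fin p → ℝ)} {S : Set (Fin q → ℝ)}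
    (hP : Bornology.IsBounded P) (hS : Bornology.IsBounded S) :
    Bornology.IsBounded (freeSum P S) := by
  refine isBounded_convexHull.mpr (Bornology.IsBounded.union ?_ ?_)
  · exact (LinearMap.toContinuousLinearMap (inlLM p q)).lipschitz.isBounded_image hP
  · exact (LinearMap.toContinuousLinearMap (inrLM p q)).lipschitz.isBounded_image hS

lemma smul_image_inl {p q : ℕ} (t : ℝ) (P : Set (Fin p → ℝ)) :
    t • ((fun x : Fin p → ℝ => Fin.append x (0 : Fin q → ℝ)) '' P)
      = (fun x : Fin p → ℝ => Fin.append x (0 : Fin q → ℝ)) '' (t • P) := by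
  ext z
  simp only [Set.mem_smul_set, Set.mem_image]
  constructor
  · rintro ⟨w, ⟨x, hx, rfl⟩, rfl⟩
    exact ⟨t • x, ⟨x, hx, rfl⟩, by rw [← append_smul, smul_zero]⟩
  · rintro ⟨w, ⟨x, hx, rfl⟩, rfl⟩
    exact ⟨Fin.append x 0, ⟨x, hx, rfl⟩, by rw [← append_smul, smul_zero]⟩

lemma smul_image_inr {p q : ℕ} (t : ℝ) (S : Set (Fin q → ℝ)) :
    t • ((fun y : Fin q → ℝ => Fin.append (0 : Fin p → ℝ) y) '' S)
      = (fun y : Fin q → ℝ => Fin.append (0 : Fin p → ℝ) y) '' (t • S) := by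
  ext z
  simp only [Set.mem_smul_set, Set.mem_image]
  constructor
  · rintro ⟨w, ⟨y, hy, rfl⟩, rfl⟩
    exact ⟨t • y, ⟨y, hy, rfl⟩, by rw [← append_smul, smul_zero]⟩
  · rintro ⟨w, ⟨y, hy, rfl⟩, rfl⟩
    exact ⟨Fin.append 0 y, ⟨y, hy, rfl⟩, by rw [← append_smul, smul_zero]⟩

lemma smul_freeSum {p d : ℕ} (hd : 1 ≤ d) {P : Set (Fin p → ℝ)} (hPc : Convex ℝ P)
    (hP0 : (0 : Fin p → ℝ) ∈ P) {t : ℝ} (ht : 0 < t) :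
    t • freeSum P (Ssimplex d) =
      convexJoin ℝ ((fun x : Fin p → ℝ => Fin.append x (0 : Fin d → ℝ)) '' (t • P))
        ((fun y : Fin d → ℝ => Fin.append (0 : Fin p → ℝ) y) '' (t • Ssimplex d)) := by
  unfold freeSum
  rw [← convexHull_smul, Set.smul_set_union, smul_image_inl, smul_image_inr]
  have hPne : (t • P).Nonempty := Set.smul_set_nonempty.mpr ⟨0, hP0⟩
  have hSne : (t • Ssimplex d).Nonempty :=
    Set.smul_set_nonempty.mpr ⟨0, zero_mem_Ssimplex hd⟩
  rw [convexHull_union (hPne.image _) (hSne.image _)]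
  have h1 : convexHull ℝ ((fun x : Fin p → ℝ => Fin.append x (0 : Fin d → ℝ)) '' (t • P))
      = (fun x : Fin p → ℝ => Fin.append x (0 : Fin d → ℝ)) '' (t • P) :=
    ((hPc.smul t).linear_image (inlLM p d)).convexHull_eq
  have h2 : convexHull ℝ ((fun y : Fin d → ℝ => Fin.append (0 : Fin p → ℝ) y) '' (t • Ssimplex d))
      = (fun y : Fin d → ℝ => Fin.append (0 : Fin p → ℝ) y) '' (t • Ssimplex d) :=
    (((convex_Ssimplex d).smul t).linear_image (inrLM p d)).convexHull_eq
  rw [h1, h2]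

lemma braun_mem {p d : ℕ} (hd : 1 ≤ d) {P : Set (Fin p → ℝ)} (hPc : Convex ℝ P)
    (hP0 : (0 : Fin p → ℝ) ∈ P) (x : Fin p → ℤ) (y : Fin d → ℤ) (t : ℕ) :
    realize (Fin.append x y) ∈ (t : ℝ) • freeSum P (Ssimplex d) ↔
      (lev y ≤ t ∧ realize x ∈ ((t - lev y : ℕ) : ℝ) • P) := by
  rcases Nat.eq_zero_or_pos t with rfl | htpos
  · rw [Nat.cast_zero, Set.zero_smul_set ⟨0, zero_mem_freeSum hP0⟩]
    constructor
    · intro hz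
      have hz0 : realize (Fin.append x y) = 0 := hz
      rw [realize_append] at hz0
      have hx0 : realize x = 0 := by
        funext i
        have := congrFun hz0 (Fin.castAdd d i)
        rwa [Fin.append_left] at this
      have hy0 : realize y = 0 := by
        funext i
        have := congrFun hz0 (Fin.natAdd p i)
        rwa [Fin.append_right] at this
      have hy0' : y = 0 := realize_inj (by rw [hy0, realize_zero])
      have hlev : lev y = 0 := by
        rw [hy0']
        unfold lev
        simp
      rw [hlev]
      refine ⟨le_refl 0, ?_⟩
      rw [Nat.zero_sub, Nat.cast_zero, Set.zero_smul_set ⟨0, hP0⟩]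
      exact hx0
    · rintro ⟨hlev, hx⟩
      have hlev0 : lev y = 0 := Nat.le_zero.mp hlev
      rw [hlev0, Nat.zero_sub, Nat.cast_zero, Set.zero_smul_set ⟨0, hP0⟩] at hx
      have hyS : realize y ∈ ((0:ℕ) : ℝ) • Ssimplex d := by
        rw [← lev_le_iff hd y 0] at *
        omega
      rw [Nat.cast_zero, Set.zero_smul_set (Ssimplex_nonempty d)] at hyS
      show realize (Fin.append x y) = 0
      rw [realize_append, hx, hyS, append_zero_zero]
  · have ht : (0:ℝ) < t := by positivity
    rw [smul_freeSum hd hPc hP0 ht]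
    constructor
    · intro hz
      rw [mem_convexJoin] at hz
      obtain ⟨a, ha, b, hb, hab⟩ := hz
      obtain ⟨xa, hxa, rfl⟩ := ha
      obtain ⟨yb, hyb, rfl⟩ := hb
      obtain ⟨u, v, hu, hv, huv, heq⟩ := hab
      have e1 : u • Fin.append xa (0 : Fin d → ℝ) = Fin.append (u • xa) 0 := by
        rw [← append_smul, smul_zero]
      have e2 : v • Fin.append (0 : Fin p → ℝ) yb = Fin.append (0 : Fin p → ℝ) (v • yb) := by
        rw [← append_smul, smul_zero]
      rw [e1, e2, ← append_add, add_zero, zero_add, realize_append] at heq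
      have hxcomp : u • xa = realize x := by
        funext i
        have := congrFun heq (Fin.castAdd d i)
        rwa [Fin.append_left, Fin.append_left] at this
      have hycomp : v • yb = realize y := by
        funext i
        have := congrFun heq (Fin.natAdd p i)
        rwa [Fin.append_right, Fin.append_right] at this
      obtain ⟨p0, hp0, rfl⟩ := hxa
      obtain ⟨s0, hs0, rfl⟩ := hyb
      have hxmem : realize x ∈ (u * (t:ℝ)) • P := by
        rw [← hxcomp, smul_smul]
        exact ⟨p0, hp0, rfl⟩
      have hymem : realize y ∈ (v * (t:ℝ)) • Ssimplex d := by
        rw [← hycomp, smul_smul]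
        exact ⟨s0, hs0, rfl⟩
      have hlev : ((lev y : ℕ) : ℝ) ≤ v * t :=
        ((lev_le_real hd y (by positivity)).mp hymem)
      have hvt : v * t ≤ t := by nlinarith
      have hlevt : lev y ≤ t := by
        have : ((lev y : ℕ) : ℝ) ≤ (t:ℝ) := le_trans hlev hvt
        exact_mod_cast this
      refine ⟨hlevt, ?_⟩
      have hsub : u * (t:ℝ) ≤ ((t - lev y : ℕ) : ℝ) := by
        rw [Nat.cast_sub hlevt]
        nlinarith
      exact smul_set_mono_convex hPc hP0 (by positivity) hsub hxmem
    · rintro ⟨hlevt, hx⟩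
      obtain ⟨p0, hp0, hxp⟩ := hx
      have hyS : realize y ∈ ((lev y : ℕ) : ℝ) • Ssimplex d := by
        rw [← lev_le_iff hd y (lev y)]
      obtain ⟨s0, hs0, hys⟩ := hyS
      rw [mem_convexJoin]
      refine ⟨Fin.append ((t:ℝ) • p0) 0, ⟨(t:ℝ) • p0, ⟨p0, hp0, rfl⟩, rfl⟩,
        Fin.append 0 ((t:ℝ) • s0), ⟨(t:ℝ) • s0, ⟨s0, hs0, rfl⟩, rfl⟩, ?_⟩
      have hcastlev : ((lev y : ℕ) : ℝ) ≤ (t : ℝ) := by exact_mod_cast hlevt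
      refine ⟨((t:ℝ) - lev y) / t, (lev y : ℝ) / t, ?_, ?_, ?_, ?_⟩
      · exact div_nonneg (by linarith) ht.le
      · positivity
      · field_simp
        ring
      · have e1 : (((t:ℝ) - lev y) / t) • Fin.append ((t:ℝ) • p0) (0 : Fin d → ℝ)
            = Fin.append (((t:ℝ) - lev y) • p0) 0 := by
          rw [← append_smul, smul_zero, smul_smul]
          congr 2
          field_simp
        have e2 : ((lev y : ℝ) / t) • Fin.append (0 : Fin p → ℝ) ((t:ℝ) • s0)
            = Fin.append (0 : Fin p → ℝ) ((lev y : ℝ) • s0) := by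
          rw [← append_smul, smul_zero, smul_smul]
          congr 2
          field_simp
        have hxp' : ((t:ℝ) - (lev y : ℝ)) • p0 = realize x := by
          rw [← Nat.cast_sub hlevt]; exact hxp
        have hys' : ((lev y : ℕ) : ℝ) • s0 = realize y := hys
        rw [e1, e2, ← append_add, add_zero, zero_add, realize_append, hxp', hys']





def Yset (d j : ℕ) : Set (Fin d → ℤ) := {y | lev y = j}

lemma Lle_finite {d : ℕ} (hd : 1 ≤ d) (j : ℕ) : {y : Fin d → ℤ | lev y ≤ j}.Finite := by
  have : {y : Fin d → ℤ | lev y ≤ j} = {y : Fin d → ℤ | realize y ∈ (j : ℝ) • Ssimplex d} := by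
    ext y
    exact lev_le_iff hd y j
  rw [this]
  exact finite_lattice (bounded_smul (bounded_Ssimplex d) _)

lemma Yset_finite {d : ℕ} (hd : 1 ≤ d) (j : ℕ) : (Yset d j).Finite :=
  (Lle_finite hd j).subset fun y hy => le_of_eq hy

lemma coeff_oneSubX_mul_ehrS {d : ℕ} (hd : 1 ≤ d) (j : ℕ) :
    PowerSeries.coeff j ((1 - PowerSeries.X) * ehrhartSeries (Ssimplex d))
      = ((Yset d j).ncard : ℤ) := by
  rw [sub_mul, one_mul, map_sub]
  cases j with
  | zero =>
    rw [coeff_ehrhart]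
    have hX : PowerSeries.coeff 0 (PowerSeries.X * ehrhartSeries (Ssimplex d)) = 0 := by
      simp
    rw [hX, sub_zero]
    have hset : {y : Fin d → ℤ | realize y ∈ ((0:ℕ) : ℝ) • Ssimplex d} = Yset d 0 := by
      ext y
      rw [Set.mem_setOf_eq, ← lev_le_iff hd y 0]
      show lev y ≤ 0 ↔ lev y = 0
      omega
    rw [← hset]
  | succ j =>
    rw [PowerSeries.coeff_succ_X_mul, coeff_ehrhart, coeff_ehrhart]
    have h1 : {y : Fin d → ℤ | realize y ∈ ((j+1:ℕ) : ℝ) • Ssimplex d}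
        = {y : Fin d → ℤ | lev y ≤ j + 1} := by
      ext y; exact (lev_le_iff hd y (j+1)).symm
    have h2 : {y : Fin d → ℤ | realize y ∈ ((j:ℕ) : ℝ) • Ssimplex d}
        = {y : Fin d → ℤ | lev y ≤ j} := by
      ext y; exact (lev_le_iff hd y j).symm
    rw [show (((j:ℕ)+1 : ℕ) : ℝ) = (((j+1:ℕ)) : ℝ) from by push_cast; ring] at h1
    rw [h1, h2]
    have hsub : {y : Fin d → ℤ | lev y ≤ j} ⊆ {y : Fin d → ℤ | lev y ≤ j + 1} := by
      intro y hy
      have h : lev y ≤ j := hy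
      show lev y ≤ j + 1
      omega
    have hdiff : {y : Fin d → ℤ | lev y ≤ j + 1} \ {y : Fin d → ℤ | lev y ≤ j} = Yset d (j+1) := by
      ext y
      simp only [Set.mem_diff, Set.mem_setOf_eq]
      show (lev y ≤ j + 1 ∧ ¬ lev y ≤ j) ↔ lev y = j + 1
      omega
    have hle : {y : Fin d → ℤ | lev y ≤ j}.ncard ≤ {y : Fin d → ℤ | lev y ≤ j + 1}.ncard :=
      Set.ncard_le_ncard hsub (Lle_finite hd (j+1))
    rw [← hdiff, Set.ncard_diff hsub (Lle_finite hd j)]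
    push_cast [hle]
    ring

lemma braun_series {p d : ℕ} (hd : 1 ≤ d) {P : Set (Fin p → ℝ)} (hPc : Convex ℝ P)
    (hP0 : (0 : Fin p → ℝ) ∈ P) (hPb : Bornology.IsBounded P) :
    ehrhartSeries (freeSum P (Ssimplex d)) =
      ehrhartSeries P * ((1 - PowerSeries.X) * ehrhartSeries (Ssimplex d)) := by
  ext t
  rw [coeff_ehrhart, PowerSeries.coeff_mul, Finset.Nat.sum_antidiagonal_eq_sum_range_succ_mk]
  set appendZ : (Fin p → ℤ) × (Fin d → ℤ) → (Fin (p + d) → ℤ) :=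
    fun xy => Fin.append xy.1 xy.2 with happ
  have happinj : Function.Injective appendZ := by
    rintro ⟨x, y⟩ ⟨x', y'⟩ h
    simp only [happ] at h
    have hx : x = x' := by
      funext i
      have := congrFun h (Fin.castAdd d i)
      rwa [Fin.append_left, Fin.append_left] at this
    have hy : y = y' := by
      funext i
      have := congrFun h (Fin.natAdd p i)
      rwa [Fin.append_right, Fin.append_right] at this
    rw [hx, hy]
  have hT : {z : Fin (p + d) → ℤ | realize z ∈ (t : ℝ) • freeSum P (Ssimplex d)}
      = ⋃ k ∈ Finset.range (t + 1),
          appendZ '' ({x : Fin p → ℤ | realize x ∈ (k : ℝ) • P} ×ˢ Yset d (t - k)) := by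
    ext z
    simp only [Set.mem_setOf_eq, Set.mem_iUnion, Set.mem_image, Set.mem_prod, Finset.mem_range]
    constructor
    · intro hz
      set x : Fin p → ℤ := fun i => z (Fin.castAdd d i) with hx
      set y : Fin d → ℤ := fun i => z (Fin.natAdd p i) with hy
      have hdec : Fin.append x y = z := append_decomp z
      rw [← hdec] at hz
      obtain ⟨hlevt, hxm⟩ := (braun_mem hd hPc hP0 x y t).mp hz
      refine ⟨t - lev y, by omega, (x, y), ⟨hxm, ?_⟩, hdec⟩
      show lev y = t - (t - lev y)
      omega
    · rintro ⟨k, hk, ⟨x, y⟩, ⟨hxm, hym⟩, rfl⟩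
      have hlev : lev y = t - k := hym
      refine (braun_mem hd hPc hP0 x y t).mpr ⟨by omega, ?_⟩
      have hks : t - lev y = k := by omega
      rw [hks]
      exact hxm
  have hfin : ∀ k ∈ Finset.range (t + 1),
      (appendZ '' ({x : Fin p → ℤ | realize x ∈ (k : ℝ) • P} ×ˢ Yset d (t - k))).Finite := by
    intro k _
    exact ((finite_lattice (bounded_smul hPb _)).prod (Yset_finite hd _)).image _
  have hdisj : ∀ k ∈ Finset.range (t + 1), ∀ k' ∈ Finset.range (t + 1), k ≠ k' →
      Disjoint (appendZ '' ({x : Fin p → ℤ | realize x ∈ (k : ℝ) • P} ×ˢ Yset d (t - k)))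
        (appendZ '' ({x : Fin p → ℤ | realize x ∈ (k' : ℝ) • P} ×ˢ Yset d (t - k'))) := by
    intro k hk k' hk' hkk'
    rw [Set.disjoint_left]
    rintro z ⟨⟨x, y⟩, ⟨-, hy⟩, rfl⟩ ⟨⟨x', y'⟩, ⟨-, hy'⟩, heq⟩
    have hpair := happinj heq
    have hyy : y' = y := congrArg Prod.snd hpair
    rw [Finset.mem_range] at hk hk'
    apply hkk'
    have e1 : lev y = t - k := hy
    have e2 : lev y' = t - k' := hy'
    rw [hyy] at e2
    omega
  rw [hT, ncard_biUnion _ _ hfin hdisj]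
  push_cast
  refine Finset.sum_congr rfl fun k hk => ?_
  rw [Set.ncard_image_of_injective _ happinj,
    ncard_prod (finite_lattice (bounded_smul hPb _)) (Yset_finite hd _),
    coeff_ehrhart, coeff_oneSubX_mul_ehrS hd]
  push_cast
  ring



end Stmt4Aux
namespace Stmt4Aux

lemma cast_transport {a b : ℕ} (h : a = b) (e : Set (Fin a → ℝ) = Set (Fin b → ℝ))
    (P : Set (Fin a → ℝ)) :
    (Convex ℝ (cast e P) ↔ Convex ℝ P) ∧ ((0 : Fin b → ℝ) ∈ cast e P ↔ (0 : Fin a → ℝ) ∈ P) ∧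
      (Bornology.IsBounded (cast e P) ↔ Bornology.IsBounded P) ∧
      ehrhartSeries (cast e P) = ehrhartSeries P := by
  subst h
  exact ⟨Iff.rfl, Iff.rfl, Iff.rfl, rfl⟩

lemma iter_all {n : ℕ} {Q : Set (Fin n → ℝ)} (hc : Convex ℝ Q) (h0 : (0 : Fin n → ℝ) ∈ Q)
    (hb : Bornology.IsBounded Q) {d : ℕ} (hd : 1 ≤ d) (k : ℕ) :
    Convex ℝ (iterFreeSum Q d k) ∧ ((0 : Fin (n + k * d) → ℝ) ∈ iterFreeSum Q d k) ∧
      Bornology.IsBounded (iterFreeSum Q d k) ∧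
      ehrhartSeries (iterFreeSum Q d k) =
        ehrhartSeries Q * ((1 - PowerSeries.X) * ehrhartSeries (Ssimplex d)) ^ k := by
  induction k with
  | zero =>
    obtain ⟨e1, e2, e3, e4⟩ := cast_transport (show n = n + 0 * d by ring)
      (by rw [Nat.zero_mul, Nat.add_zero]) Q
    exact ⟨e1.mpr hc, e2.mpr h0, e3.mpr hb, by
      rw [show ehrhartSeries (iterFreeSum Q d 0)
          = ehrhartSeries (cast (by rw [Nat.zero_mul, Nat.add_zero] :
            Set (Fin n → ℝ) = Set (Fin (n + 0 * d) → ℝ)) Q) from rfl, e4, pow_zero, mul_one]⟩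
  | succ k ih =>
    obtain ⟨ihc, ih0, ihb, ihe⟩ := ih
    have hconv := freeSum_convex (iterFreeSum Q d k) (Ssimplex d)
    have h0' : (0 : Fin (n + k * d + d) → ℝ) ∈ freeSum (iterFreeSum Q d k) (Ssimplex d) :=
      zero_mem_freeSum ih0
    have hb' := freeSum_bounded ihb (bounded_Ssimplex d)
    have he := braun_series hd ihc ih0 ihb
    obtain ⟨e1, e2, e3, e4⟩ := cast_transport (show n + k * d + d = n + (k + 1) * d by ring)
      (by rw [show n + k * d + d = n + (k + 1) * d from by ring])
      (freeSum (iterFreeSum Q d k) (Ssimplex d))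
    refine ⟨e1.mpr hconv, e2.mpr h0', e3.mpr hb', ?_⟩
    calc ehrhartSeries (iterFreeSum Q d (k + 1))
        = ehrhartSeries (freeSum (iterFreeSum Q d k) (Ssimplex d)) := e4
      _ = ehrhartSeries Q * ((1 - PowerSeries.X) * ehrhartSeries (Ssimplex d)) ^ (k + 1) := by
          rw [he, ihe, pow_succ, mul_assoc]

end Stmt4Aux

theorem stmt4 {n : ℕ} (Q : Set (Fin n → ℝ))
    (hQ : IsLatticePolytope Q) (hQfull : affineSpan ℝ Q = ⊤)
    (h0 : (0 : Fin n → ℝ) ∈ interior Q) (k : ℕ) (hk : 1 ≤ k) :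
    ∃ F : PowerSeries ℤ,
      (1 - PowerSeries.X) ^ k * F = (1 - PowerSeries.X) ^ (n + 1) * ehrhartSeries Q ∧
      ∀ j : ℕ, ∃ N : ℕ, ∀ d : ℕ, N ≤ d → 1 ≤ d →
        PowerSeries.coeff j
          ((1 - PowerSeries.X) ^ (n + k * d + 1) * ehrhartSeries (iterFreeSum Q d k)) =
          PowerSeries.coeff j F := by
  classical
  open Stmt4Aux in
  obtain ⟨V, hV⟩ := hQ
  have hc : Convex ℝ Q := by rw [hV]; exact convex_convexHull ℝ _
  have hb : Bornology.IsBounded Q := by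
    rw [hV]
    exact isBounded_convexHull.mpr ((V.finite_toSet.image _).isBounded)
  have h0' : (0 : Fin n → ℝ) ∈ Q := interior_subset h0
  refine ⟨(1 - PowerSeries.X) ^ (n + 1) * ehrhartSeries Q * Stmt4Aux.psOne ^ k, ?_, ?_⟩
  · have hr : (1 - PowerSeries.X) ^ k *
        ((1 - PowerSeries.X) ^ (n + 1) * ehrhartSeries Q * Stmt4Aux.psOne ^ k)
        = ((1 - PowerSeries.X) ^ (n + 1) * ehrhartSeries Q) *
          ((1 - PowerSeries.X) * Stmt4Aux.psOne) ^ k := by rw [mul_pow]; ring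
    rw [hr, Stmt4Aux.oneSub_mul_psOne, one_pow, mul_one]
  · intro j
    refine ⟨j, fun d hdj hd1 => ?_⟩
    have hiter := (Stmt4Aux.iter_all hc h0' hb hd1 k).2.2.2
    rw [hiter]
    have hrearr : (1 - PowerSeries.X) ^ (n + k * d + 1) *
        (ehrhartSeries Q * ((1 - PowerSeries.X) * ehrhartSeries (Ssimplex d)) ^ k)
        = ((1 - PowerSeries.X) ^ (n + 1) * ehrhartSeries Q) *
          ((1 - PowerSeries.X) ^ (d + 1) * ehrhartSeries (Ssimplex d)) ^ k := by
      rw [mul_pow, mul_pow, ← pow_mul]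
      ring
    rw [hrearr]
    have hS : Stmt4Aux.EqUpTo j
        ((1 - PowerSeries.X) ^ (d + 1) * ehrhartSeries (Ssimplex d)) Stmt4Aux.psOne := by
      have h1 : Stmt4Aux.EqUpTo j (ehrhartSeries (Ssimplex d)) (Stmt4Aux.psOne ^ (d + 2)) :=
        fun m hm => Stmt4Aux.ehrS_coeff hd1 (le_trans hm hdj)
      have h2 := (Stmt4Aux.EqUpTo.refl (A := (1 - PowerSeries.X) ^ (d + 1))).mul h1
      have h3 : (1 - PowerSeries.X) ^ (d + 1) * Stmt4Aux.psOne ^ (d + 2) = Stmt4Aux.psOne := by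
        have hr2 : (1 - PowerSeries.X) ^ (d + 1) * Stmt4Aux.psOne ^ (d + 2)
            = ((1 - PowerSeries.X) * Stmt4Aux.psOne) ^ (d + 1) * Stmt4Aux.psOne := by
          rw [mul_pow]; ring
        rw [hr2, Stmt4Aux.oneSub_mul_psOne, one_pow, one_mul]
      intro m hm
      rw [h2 m hm, h3]
    have hfinal := (Stmt4Aux.EqUpTo.refl
      (A := (1 - PowerSeries.X) ^ (n + 1) * ehrhartSeries Q)).mul (hS.pow k)
    exact hfinal j le_rfl
end
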